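/- arXiv:1512.02849 — 13 statements merged into one kernel-verified Lean document; each statement's English description precedes it below -/
import Mathlib

section
/- Let Φ : H₂(ℂ) → H₂(ℂ) satisfy Φ(ABA) = Φ(A)Φ(B)Φ(A) for all A, B. If Φ(0) is invertible, then Φ(0) is a Hermitian involution and Φ(A) = Φ(0) for every A ∈ H₂(ℂ). -/
open Matrix

theorem jtp_phi_zero_invertible
    (Φ : Matrix (Fin 2) (Fin 2) ℂ → Matrix (Fin 2) (Fin 2) ℂ)
    (hherm : ∀ A, A.IsHermitian → (Φ A).IsHermitian)
    (hjtp : ∀ A B, A.IsHermitian → B.IsHermitian → Φ (A * B * A) = Φ A * Φ B * Φ A)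
    (hinv : IsUnit (Φ 0)) :
    (Φ 0).IsHermitian ∧ Φ 0 * Φ 0 = 1 ∧ ∀ A, A.IsHermitian → Φ A = Φ 0 := by
  have h0 : (0 : Matrix (Fin 2) (Fin 2) ℂ).IsHermitian := Matrix.isHermitian_zero
  set P := Φ 0 with hP
  obtain ⟨u, hu⟩ := hinv
  have hPinv : P * (↑u⁻¹ : Matrix (Fin 2) (Fin 2) ℂ) = 1 := by
    rw [← hu]; exact_mod_cast u.mul_inv
  have hinvP : (↑u⁻¹ : Matrix (Fin 2) (Fin 2) ℂ) * P = 1 := by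
    rw [← hu]; exact_mod_cast u.inv_mul
  have hcube : P = P * P * P := by
    have := hjtp 0 0 h0 h0
    simpa using this
  have hsq : P * P = 1 := by
    have h2 : (↑u⁻¹ : Matrix (Fin 2) (Fin 2) ℂ) * P
        = (↑u⁻¹ : Matrix (Fin 2) (Fin 2) ℂ) * (P * P * P) := by
      rw [← hcube]
    rw [hinvP, ← mul_assoc, ← mul_assoc, hinvP, one_mul] at h2
    exact h2.symm
  refine ⟨hherm 0 h0, hsq, fun A hA => ?_⟩
  have key : P = P * Φ A * P := by
    have := hjtp 0 A h0 hA
    simpa using this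
  calc Φ A = (P * P) * Φ A * (P * P) := by rw [hsq]; simp
    _ = P * (P * Φ A * P) * P := by noncomm_ring
    _ = P * P * P := by rw [← key]
    _ = P := hcube.symm
end

section
/- Let Φ : H₂(ℂ) → H₂(ℂ) be a J.T.P. homomorphism such that Φ(I) is invertible. Then Φ(I)² = I, and Φ(I) commutes with Φ(A) for every A ∈ H₂(ℂ). -/
open Matrix

theorem jtp_phi_identity_invertible
    (Φ : Matrix (Fin 2) (Fin 2) ℂ → Matrix (Fin 2) (Fin 2) ℂ)
    (hherm : ∀ A, A.IsHermitian → (Φ A).IsHermitian)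
    (hjtp : ∀ A B, A.IsHermitian → B.IsHermitian → Φ (A * B * A) = Φ A * Φ B * Φ A)
    (hinv : IsUnit (Φ 1)) :
    Φ 1 * Φ 1 = 1 ∧ ∀ A, A.IsHermitian → Φ 1 * Φ A = Φ A * Φ 1 := by
  have h1 : Matrix.IsHermitian (1 : Matrix (Fin 2) (Fin 2) ℂ) := Matrix.isHermitian_one
  have hP : Φ 1 = Φ 1 * Φ 1 * Φ 1 := by
    have := hjtp 1 1 h1 h1
    simpa using this
  have hsq : Φ 1 * Φ 1 = 1 := by
    apply hinv.mul_left_cancel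
    rw [mul_one, ← mul_assoc, ← hP]
  refine ⟨hsq, fun A hA => ?_⟩
  have hfix : Φ A = Φ 1 * Φ A * Φ 1 := by
    have := hjtp 1 A h1 hA
    simpa using this
  calc Φ 1 * Φ A = Φ 1 * Φ A * 1 := by rw [mul_one]
    _ = Φ 1 * Φ A * (Φ 1 * Φ 1) := by rw [hsq]
    _ = (Φ 1 * Φ A * Φ 1) * Φ 1 := by noncomm_ring
    _ = Φ A * Φ 1 := by rw [← hfix]
end

section
/- Let Φ : H₂(ℂ) → H₂(ℂ) be a J.T.P. homomorphism with Φ(0) = 0, Φ(I) = I, and Φ(J) ∈ {I, -I} where J = diag(1, -1). Then every Hermitian involution A with A ≠ ±I satisfies Φ(A) ∈ {I, -I}, and whenever A, B ∈ H₂(ℂ) are unitarily similar, Φ(A) = Φ(B). -/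
open Matrix Complex

abbrev M2 := Matrix (Fin 2) (Fin 2) ℂ

lemma Jm_eq : (Matrix.diagonal ![(1 : ℂ), -1]) = !![1, 0; 0, -1] := by
  ext i j
  fin_cases i <;> fin_cases j <;> simp [Matrix.diagonal]

lemma herm_lit (a d : ℂ) (b : ℂ) (ha : (starRingEnd ℂ) a = a) (hd : (starRingEnd ℂ) d = d) :
    (!![a, b; (starRingEnd ℂ) b, d] : M2).IsHermitian := by
  unfold Matrix.IsHermitian
  ext i j
  fin_cases i <;> fin_cases j <;>
    simp [Matrix.conjTranspose_apply, ha, hd]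

lemma Jm_herm : (Matrix.diagonal ![(1 : ℂ), -1]).IsHermitian := by
  rw [Jm_eq]
  have := herm_lit (1:ℂ) (-1) 0 (by simp) (by simp)
  simpa using this

lemma phi_sq (Φ : M2 → M2)
    (hjtp : ∀ A B : M2, A.IsHermitian → B.IsHermitian → Φ (A * B * A) = Φ A * Φ B * Φ A)
    (h1 : Φ 1 = 1) {A : M2} (hA : A.IsHermitian) (hA2 : A * A = 1) :
    Φ A * Φ A = 1 := by
  have h := hjtp A 1 hA Matrix.isHermitian_one
  rw [mul_one, hA2, h1, mul_one] at h
  exact h.symm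

lemma sandwich (Φ : M2 → M2)
    (hjtp : ∀ A B : M2, A.IsHermitian → B.IsHermitian → Φ (A * B * A) = Φ A * Φ B * Φ A)
    (h1 : Φ 1 = 1)
    (hJ : Φ (Matrix.diagonal ![(1 : ℂ), -1]) = 1 ∨ Φ (Matrix.diagonal ![(1 : ℂ), -1]) = -1)
    {A B : M2} (hA : A.IsHermitian) (hA2 : A * A = 1)
    (hAB : A * (Matrix.diagonal ![(1 : ℂ), -1]) * A = B) :
    Φ B = 1 ∨ Φ B = -1 := by
  have h := hjtp A (Matrix.diagonal ![(1 : ℂ), -1]) hA Jm_herm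
  rw [hAB] at h
  have hsq := phi_sq Φ hjtp h1 hA hA2
  rcases hJ with hJ | hJ
  · left; rw [h, hJ, mul_one, hsq]
  · right; rw [h, hJ]
    rw [mul_neg_one, neg_mul, hsq]

-- trace zero lemma
lemma trace_zero (B : M2) (hB : B.IsHermitian) (hB2 : B * B = 1)
    (hn1 : B ≠ 1) (hnm1 : B ≠ -1) : B 1 1 = -B 0 0 := by
  have h10 : B 1 0 = (starRingEnd ℂ) (B 0 1) := (hB.apply 1 0).symm
  have e00 : B 0 0 * B 0 0 + B 0 1 * B 1 0 = 1 := by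
    have := congrFun (congrFun hB2 0) 0
    simpa [Matrix.mul_apply, Fin.sum_univ_two, Matrix.one_apply] using this
  have e01 : B 0 0 * B 0 1 + B 0 1 * B 1 1 = 0 := by
    have := congrFun (congrFun hB2 0) 1
    simpa [Matrix.mul_apply, Fin.sum_univ_two, Matrix.one_apply] using this
  have e11 : B 1 0 * B 0 1 + B 1 1 * B 1 1 = 1 := by
    have := congrFun (congrFun hB2 1) 1
    simpa [Matrix.mul_apply, Fin.sum_univ_two, Matrix.one_apply] using this
  by_contra hne
  have hsum : B 0 0 + B 1 1 ≠ 0 := fun h => hne (by linear_combination h)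
  have hfac : (B 0 0 - B 1 1) * (B 0 0 + B 1 1) = 0 := by
    linear_combination e00 - e11 + (B 0 1 * B 1 0 - B 1 0 * B 0 1)
  have hdiag : B 0 0 = B 1 1 := by
    rcases mul_eq_zero.mp hfac with h | h
    · linear_combination h
    · exact absurd h hsum
  have hz : B 0 1 = 0 := by
    have : B 0 1 * (B 0 0 + B 1 1) = 0 := by linear_combination e01
    rcases mul_eq_zero.mp this with h | h
    · exact h
    · exact absurd h hsum
  have h10' : B 1 0 = 0 := by rw [h10, hz]; simp
  have hsq : B 0 0 * B 0 0 = 1 := by linear_combination e00 - B 0 1 * h10' - hz * B 1 0 + hz * B 1 0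
  have : (B 0 0 - 1) * (B 0 0 + 1) = 0 := by linear_combination hsq
  rcases mul_eq_zero.mp this with h | h
  · apply hn1
    rw [Matrix.eta_fin_two B, hz, h10', ← hdiag, Matrix.one_fin_two]
    have : B 0 0 = 1 := by linear_combination h
    rw [this]
  · apply hnm1
    rw [Matrix.eta_fin_two B, hz, h10', ← hdiag]
    have : B 0 0 = -1 := by linear_combination h
    rw [this, Matrix.one_fin_two]
    norm_num

lemma herm_of_entries (A : M2) (h00 : (starRingEnd ℂ) (A 0 0) = A 0 0)
    (h11 : (starRingEnd ℂ) (A 1 1) = A 1 1) (h10 : A 1 0 = (starRingEnd ℂ) (A 0 1)) :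
    A.IsHermitian := by
  unfold Matrix.IsHermitian
  ext i j
  fin_cases i <;> fin_cases j <;>
    simp [Matrix.conjTranspose_apply, h00, h11, h10]

lemma conj_div_real' (t : ℝ) (z : ℂ) :
    (starRingEnd ℂ) (z / ((t:ℝ):ℂ)) = (starRingEnd ℂ) z / ((t:ℝ):ℂ) := by
  rw [map_div₀, Complex.conj_ofReal]

lemma ww_eq (a r : ℝ) (z : ℂ) (hzC : z * (starRingEnd ℂ) z = 1 - (r:ℂ)^2)
    (haC : ((a:ℂ))^2 = (1 + (r:ℂ))/2) (ha0 : ((a:ℝ):ℂ) ≠ 0) :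
    (z / ((2*a:ℝ):ℂ)) * (starRingEnd ℂ) (z / ((2*a:ℝ):ℂ)) = (1 - (r:ℂ))/2 := by
  rw [map_div₀, Complex.conj_ofReal]
  rw [div_mul_div_comm, hzC]
  push_cast
  field_simp
  linear_combination (2*(r:ℂ) - 2) * haC

lemma main1 (Φ : M2 → M2)
    (hjtp : ∀ A B : M2, A.IsHermitian → B.IsHermitian → Φ (A * B * A) = Φ A * Φ B * Φ A)
    (h1 : Φ 1 = 1)
    (hJ : Φ (Matrix.diagonal ![(1 : ℂ), -1]) = 1 ∨ Φ (Matrix.diagonal ![(1 : ℂ), -1]) = -1)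
    (B : M2) (hB : B.IsHermitian) (hB2 : B * B = 1) (hn1 : B ≠ 1) (hnm1 : B ≠ -1) :
    Φ B = 1 ∨ Φ B = -1 := by
  have htr := trace_zero B hB hB2 hn1 hnm1
  have h10 : B 1 0 = (starRingEnd ℂ) (B 0 1) := (hB.apply 1 0).symm
  obtain ⟨r, hr⟩ : ∃ t : ℝ, B 0 0 = (t : ℂ) := conj_eq_iff_real.mp (hB.apply 0 0)
  have e00 : B 0 0 * B 0 0 + B 0 1 * B 1 0 = 1 := by
    have := congrFun (congrFun hB2 0) 0
    simpa [Matrix.mul_apply, Fin.sum_univ_two, Matrix.one_apply] using this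
  have hzC : B 0 1 * (starRingEnd ℂ) (B 0 1) = 1 - (r:ℂ)^2 := by
    rw [← h10]; linear_combination e00 - (B 0 0 + (r:ℂ)) * hr
  have hnz : Complex.normSq (B 0 1) = 1 - r^2 := by
    have h := hzC
    rw [Complex.mul_conj] at h
    exact_mod_cast h
  by_cases hcase : r = -1
  · -- B = -J, use A = !![0,1;1,0]
    have hz0 : B 0 1 = 0 := by
      have : Complex.normSq (B 0 1) = 0 := by rw [hnz, hcase]; ring
      exact Complex.normSq_eq_zero.mp this
    have hBeq : B = !![-1, 0; 0, 1] := by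
      rw [Matrix.eta_fin_two B, hz0, h10, hz0, htr, hr, hcase]
      norm_num
    have hAherm : (!![0, 1; 1, 0] : M2).IsHermitian :=
      herm_of_entries _ (by norm_num) (by norm_num) (by norm_num)
    refine sandwich Φ hjtp h1 hJ hAherm ?_ ?_
    · rw [Matrix.mul_fin_two, Matrix.one_fin_two]
      norm_num
    · rw [Jm_eq, hBeq]
      norm_num [Matrix.mul_fin_two]
  · -- main construction
    have hr2 : r^2 ≤ 1 := by nlinarith [Complex.normSq_nonneg (B 0 1)]
    have hrlb : -1 < r := lt_of_le_of_ne (by nlinarith) (Ne.symm hcase)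
    set a : ℝ := Real.sqrt ((1+r)/2) with hadef
    have hapos : 0 < a := Real.sqrt_pos.mpr (by linarith)
    have ha2 : a^2 = (1+r)/2 := Real.sq_sqrt (by linarith)
    have haC : ((a:ℂ))^2 = (1 + (r:ℂ))/2 := by
      rw [show ((a:ℂ))^2 = ((a^2 : ℝ) : ℂ) by push_cast; ring, ha2]
      push_cast
      ring
    have haC0 : ((a:ℝ):ℂ) ≠ 0 := by exact_mod_cast hapos.ne'
    obtain ⟨w, hw1, hw2, hw3⟩ :
        ∃ w : ℂ, w * (starRingEnd ℂ) w = (1 - (r:ℂ))/2 ∧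
          2 * (a:ℂ) * w = B 0 1 ∧ 2 * (a:ℂ) * (starRingEnd ℂ) w = (starRingEnd ℂ) (B 0 1) := by
      refine ⟨B 0 1 / ((2*a:ℝ):ℂ), ww_eq a r (B 0 1) hzC haC haC0, ?_, ?_⟩
      · rw [show (2 * (a:ℂ)) = ((2*a:ℝ):ℂ) by push_cast; ring, mul_div_cancel₀]
        push_cast
        simpa using haC0
      · rw [map_div₀, Complex.conj_ofReal,
          show (2 * (a:ℂ)) = ((2*a:ℝ):ℂ) by push_cast; ring, mul_div_cancel₀]
        push_cast
        simpa using haC0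
    have hAherm : (!![((a:ℝ):ℂ), w; (starRingEnd ℂ) w, -((a:ℝ):ℂ)] : M2).IsHermitian :=
      herm_of_entries _ (by simp [Complex.conj_ofReal]) (by simp [Complex.conj_ofReal])
        (by norm_num)
    refine sandwich Φ hjtp h1 hJ hAherm ?_ ?_
    · rw [Matrix.mul_fin_two, Matrix.one_fin_two]
      ext i j
      fin_cases i <;> fin_cases j <;> simp
      · linear_combination haC + hw1
      · ring
      · ring
      · linear_combination haC + hw1
    · rw [Jm_eq, Matrix.mul_fin_two, Matrix.mul_fin_two, Matrix.eta_fin_two B, hr, htr, hr, h10]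
      ext i j
      fin_cases i <;> fin_cases j <;> simp
      · linear_combination haC - hw1
      · linear_combination hw2
      · linear_combination hw3
      · linear_combination hw1 - haC

lemma part2 (Φ : M2 → M2)
    (hjtp : ∀ A B : M2, A.IsHermitian → B.IsHermitian → Φ (A * B * A) = Φ A * Φ B * Φ A)
    (h1 : Φ 1 = 1)
    (hJ : Φ (Matrix.diagonal ![(1 : ℂ), -1]) = 1 ∨ Φ (Matrix.diagonal ![(1 : ℂ), -1]) = -1)
    (B : M2) (hB : B.IsHermitian) (U : M2) (hU : U ∈ Matrix.unitaryGroup (Fin 2) ℂ) :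
    Φ (U * B * star U) = Φ B := by
  obtain ⟨c, hc⟩ := IsAlgClosed.exists_pow_nat_eq (U.det) (n := 2) two_pos
  have hUU : U * star U = 1 := Matrix.mem_unitaryGroup_iff.mp hU
  have hdet : U.det * (starRingEnd ℂ) U.det = 1 := by
    have h := congrArg Matrix.det hUU
    rwa [Matrix.det_mul, Matrix.star_eq_conjTranspose, Matrix.det_conjTranspose,
      Matrix.det_one] at h
  have hcc : c * (starRingEnd ℂ) c = 1 := by
    have h4 : (Complex.normSq c : ℂ)^2 = 1 := by
      rw [← Complex.mul_conj]
      calc (c * (starRingEnd ℂ) c)^2 = c^2 * (starRingEnd ℂ) (c^2) := by rw [map_pow]; ring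
        _ = 1 := by rw [hc]; exact hdet
    have h5 : (Complex.normSq c)^2 = 1 := by exact_mod_cast h4
    have h6 : Complex.normSq c = 1 := by nlinarith [Complex.normSq_nonneg c]
    rw [Complex.mul_conj, h6]
    norm_num
  have hc0 : c ≠ 0 := by
    intro h
    rw [h] at hcc
    simp at hcc
  set V : M2 := c⁻¹ • U with hVdef
  have hV : U = c • V := by rw [hVdef, smul_smul, mul_inv_cancel₀ hc0, one_smul]
  have hstarc : star c = (starRingEnd ℂ) c := rfl
  have hVU : V * star V = 1 := by
    rw [hVdef, star_smul, Matrix.smul_mul, Matrix.mul_smul, smul_smul, hUU]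
    have : c⁻¹ * star c⁻¹ = 1 := by
      rw [star_inv₀, hstarc, ← mul_inv]
      rw [hcc]
      norm_num
    rw [this, one_smul]
  have hVdet1 : V.det = 1 := by
    rw [hVdef, Matrix.det_smul, Fintype.card_fin]
    field_simp
    exact hc.symm
  have hadj : star V = V.adjugate := by
    have h2 : V * V.adjugate = 1 := by rw [Matrix.mul_adjugate, hVdet1, one_smul]
    have h3 : star V * V = 1 := mul_eq_one_comm.mp hVU
    calc star V = star V * (V * V.adjugate) := by rw [h2, mul_one]
      _ = (star V * V) * V.adjugate := by rw [Matrix.mul_assoc]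
      _ = V.adjugate := by rw [h3, Matrix.one_mul]
  have hV10 : V 1 0 = -(starRingEnd ℂ) (V 0 1) := by
    have h := congrFun (congrFun hadj 1) 0
    rw [Matrix.adjugate_fin_two] at h
    simp [Matrix.star_eq_conjTranspose, Matrix.conjTranspose_apply] at h
    linear_combination h
  have hV11 : V 1 1 = (starRingEnd ℂ) (V 0 0) := by
    have h := congrFun (congrFun hadj 1) 1
    rw [Matrix.adjugate_fin_two] at h
    simp [Matrix.star_eq_conjTranspose, Matrix.conjTranspose_apply] at h
    rw [← h]
    simp
  set α : ℂ := V 0 0 with halpha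
  set β : ℂ := V 0 1 with hbeta
  obtain ⟨u, hu1, hub, hub2⟩ :
      ∃ u : ℂ, u * (starRingEnd ℂ) u = 1 ∧
        u * (starRingEnd ℂ) β = ((‖β‖ : ℝ) : ℂ) ∧
        (starRingEnd ℂ) u * β = ((‖β‖ : ℝ) : ℂ) := by
    by_cases hb : β = 0
    · exact ⟨1, by norm_num, by simp [hb], by simp [hb]⟩
    · have habs : (‖β‖ : ℝ) ≠ 0 := norm_ne_zero_iff.mpr hb
      have habsC : ((‖β‖ : ℝ) : ℂ) ≠ 0 := by exact_mod_cast habs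
      have key : β * (starRingEnd ℂ) β = ((‖β‖ : ℝ) : ℂ) * ((‖β‖ : ℝ) : ℂ) := by
        rw [Complex.mul_conj]
        norm_cast
        rw [← Complex.sq_norm]
        ring
      refine ⟨β / ((‖β‖ : ℝ) : ℂ), ?_, ?_, ?_⟩
      · rw [map_div₀, Complex.conj_ofReal]
        field_simp
        first
        | linear_combination key | linear_combination -key
        | linear_combination 2*key | linear_combination -2*key
      · rw [div_mul_eq_mul_div, eq_comm, eq_div_iff habsC]
        first
        | linear_combination key | linear_combination -key
      · rw [map_div₀, Complex.conj_ofReal, div_mul_eq_mul_div, eq_comm, eq_div_iff habsC]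
        first
        | linear_combination key | linear_combination -key
  set S : M2 := !![0, u; (starRingEnd ℂ) u, 0] with hSdef
  have hS : S.IsHermitian := herm_of_entries _ (by simp [hSdef]) (by simp [hSdef]) (by simp [hSdef])
  have hSS : S * S = 1 := by
    rw [hSdef, Matrix.mul_fin_two, Matrix.one_fin_two]
    ext i j
    fin_cases i <;> fin_cases j <;> simp <;> linear_combination hu1
  have hSn1 : S ≠ 1 := by
    intro h
    have := congrFun (congrFun h 0) 0
    simp [hSdef, Matrix.one_apply] at this
  have hSnm1 : S ≠ -1 := by
    intro h
    have := congrFun (congrFun h 0) 0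
    simp [hSdef, Matrix.neg_apply, Matrix.one_apply] at this
  have hVeta : V = !![α, β; -(starRingEnd ℂ) β, (starRingEnd ℂ) α] := by
    have h := Matrix.eta_fin_two V
    rw [hV10, hV11, ← halpha, ← hbeta] at h
    exact h
  set Tm : M2 := !![-((‖β‖ : ℝ) : ℂ), u * (starRingEnd ℂ) α;
      (starRingEnd ℂ) u * α, ((‖β‖ : ℝ) : ℂ)] with hTdef
  have hTeq : S * V = Tm := by
    rw [hSdef, hVeta, Matrix.mul_fin_two, hTdef]
    ext i j
    fin_cases i <;> fin_cases j <;> simp <;>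
      first
      | linear_combination hub | linear_combination -hub
      | linear_combination hub2 | linear_combination -hub2
  have hT : Tm.IsHermitian := by
    refine herm_of_entries _ ?_ ?_ ?_ <;> rw [hTdef] <;> simp [Complex.conj_ofReal]
  have hTsym : star Tm = Tm := by rw [Matrix.star_eq_conjTranspose]; exact hT
  have hSe : star S = S := by rw [Matrix.star_eq_conjTranspose]; exact hS
  have hTT : Tm * Tm = 1 := by
    have h2 : S * V = star (S * V) := by rw [hTeq]; exact hTsym.symm
    calc Tm * Tm = (S * V) * (S * V) := by rw [hTeq]
      _ = (S * V) * star (S * V) := by nth_rewrite 2 [h2]; rfl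
      _ = S * (V * star V) * star S := by rw [StarMul.star_mul]; noncomm_ring
      _ = 1 := by rw [hVU, Matrix.mul_one, hSe, hSS]
  have habs_nonneg : 0 ≤ ‖β‖ := norm_nonneg β
  have hTn1 : Tm ≠ 1 := by
    intro h
    have h2 := congrFun (congrFun h 0) 0
    rw [hTdef] at h2
    simp [Matrix.one_apply] at h2
    have h3 : ((‖β‖ : ℝ) : ℂ) = -1 := by linear_combination -h2
    have h4 : (‖β‖ : ℝ) = -1 := by exact_mod_cast h3
    linarith
  have hTnm1 : Tm ≠ -1 := by
    intro h
    have h2 := congrFun (congrFun h 1) 1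
    rw [hTdef] at h2
    simp [Matrix.neg_apply, Matrix.one_apply] at h2
    have h4 : (‖β‖ : ℝ) = -1 := by exact_mod_cast h2
    linarith
  -- rewrite the conjugation
  have hVST : V = S * Tm := by
    rw [← hTeq, ← Matrix.mul_assoc, hSS, Matrix.one_mul]
  have hstarV : star V = Tm * S := by
    rw [hVST, StarMul.star_mul, hTsym, hSe]
  have hAeq : U * B * star U = S * (Tm * B * Tm) * S := by
    have hcc2 : (starRingEnd ℂ) c * c = 1 := by rw [mul_comm]; exact hcc
    rw [hV, star_smul]
    simp only [Matrix.smul_mul, Matrix.mul_smul, smul_smul, hstarc]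
    simp only [hcc, hcc2, one_smul]
    rw [hstarV, hVST]
    noncomm_ring
  have hTBT : (Tm * B * Tm).IsHermitian := by
    unfold Matrix.IsHermitian
    rw [Matrix.conjTranspose_mul, Matrix.conjTranspose_mul, hT.eq, hB.eq]
    noncomm_ring
  rw [hAeq, hjtp S _ hS hTBT, hjtp Tm B hT hB]
  rcases main1 Φ hjtp h1 hJ S hS hSS hSn1 hSnm1 with hS1 | hS1 <;>
    rcases main1 Φ hjtp h1 hJ Tm hT hTT hTn1 hTnm1 with hT1 | hT1 <;>
      rw [hS1, hT1] <;>
        noncomm_ring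

theorem jtp_nontrivial_involution_to_scalar
    (Φ : Matrix (Fin 2) (Fin 2) ℂ → Matrix (Fin 2) (Fin 2) ℂ)
    (hherm : ∀ A, A.IsHermitian → (Φ A).IsHermitian)
    (hjtp : ∀ A B, A.IsHermitian → B.IsHermitian → Φ (A * B * A) = Φ A * Φ B * Φ A)
    (h0 : Φ 0 = 0) (h1 : Φ 1 = 1)
    (hJ : Φ (Matrix.diagonal ![(1 : ℂ), -1]) = 1 ∨ Φ (Matrix.diagonal ![(1 : ℂ), -1]) = -1) :
    (∀ A : Matrix (Fin 2) (Fin 2) ℂ, A.IsHermitian → A * A = 1 → A ≠ 1 → A ≠ -1 →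
        Φ A = 1 ∨ Φ A = -1) ∧
    (∀ A B : Matrix (Fin 2) (Fin 2) ℂ, A.IsHermitian → B.IsHermitian →
        (∃ U ∈ Matrix.unitaryGroup (Fin 2) ℂ, A = U * B * star U) → Φ A = Φ B) := by
  constructor
  · intro A hA hA2 hn1 hnm1
    exact main1 Φ hjtp h1 hJ A hA hA2 hn1 hnm1
  · rintro A B hA hB ⟨U, hU, rfl⟩
    exact part2 Φ hjtp h1 hJ B hB U hU
end

section
/- Let Φ : H₂(ℂ) → H₂(ℂ) be a J.T.P. homomorphism with Φ(0) = 0, Φ(I) = I, and Φ(J) ∈ {I, -I} where J = diag(1, -1). Then Φ(A) = 0 for every A ∈ H₂(ℂ) with rank A = 1. -/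
open Matrix

lemma Jmat : Matrix.diagonal ![(1 : ℂ), -1] = !![1, 0; 0, -1] := by
  ext i j; fin_cases i <;> fin_cases j <;> simp [Matrix.diagonal]

lemma aux_reflection (S : Matrix (Fin 2) (Fin 2) ℂ) (hS : S.IsHermitian)
    (h2 : S * S = 1) (htr : S.trace = 0) :
    ∃ M : Matrix (Fin 2) (Fin 2) ℂ, M.IsHermitian ∧ M * M = 1 ∧
      M * Matrix.diagonal ![(1 : ℂ), -1] * M = S := by
  rw [Jmat]
  have h00 : (starRingEnd ℂ) (S 0 0) = S 0 0 := by
    have := congrFun (congrFun hS.symm 0) 0; simp only [conjTranspose_apply] at this; exact this.symm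
  obtain ⟨a, ha⟩ : ∃ a : ℝ, S 0 0 = (a : ℂ) := ⟨(S 0 0).re, (Complex.conj_eq_iff_re.mp h00).symm⟩
  have h10 : S 1 0 = (starRingEnd ℂ) (S 0 1) := by
    have := congrFun (congrFun hS 1) 0; simpa [conjTranspose_apply] using this.symm
  set b := S 0 1 with hb
  have h11 : S 1 1 = (-a : ℂ) := by
    have : S 0 0 + S 1 1 = 0 := by simpa [Matrix.trace, Fin.sum_univ_two] using htr
    rw [ha] at this; linear_combination this
  have hnorm : (a : ℂ) * a + b * (starRingEnd ℂ) b = 1 := by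
    have := congrFun (congrFun h2 0) 0
    simpa [mul_apply, Fin.sum_univ_two, ha, h10] using this
  have hnormR : a * a + Complex.normSq b = 1 := by
    have := congrArg Complex.re hnorm
    simpa [Complex.mul_conj, Complex.add_re, Complex.ofReal_mul] using this
  by_cases hcase : a = -1
  · -- then b = 0, S = diag(-1,1), take M = σx
    have hb0 : b = 0 := by
      have : Complex.normSq b = 0 := by rw [hcase] at hnormR; nlinarith
      exact Complex.normSq_eq_zero.mp this
    refine ⟨!![0, 1; 1, 0], ?_, ?_, ?_⟩
    · ext i j; fin_cases i <;> fin_cases j <;> simp [conjTranspose_apply]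
    · ext i j; fin_cases i <;> fin_cases j <;> simp [mul_apply, Fin.sum_univ_two]
    · ext i j; fin_cases i <;> fin_cases j <;>
        simp [mul_apply, Fin.sum_univ_two, ha, hcase, h10, h11, hb0, hb.symm]
  · have ha1 : -1 ≤ a := by nlinarith [Complex.normSq_nonneg b]
    have hapos : 0 < (1 + a) / 2 := by
      rcases lt_or_eq_of_le ha1 with h | h
      · linarith
      · exact absurd h.symm hcase
    set m : ℝ := Real.sqrt ((1 + a) / 2) with hmdef
    have hm2R : m * m = (1 + a) / 2 := Real.mul_self_sqrt (le_of_lt hapos)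
    have hm2 : (m : ℂ) * m = (1 + (a : ℂ)) / 2 := by exact_mod_cast congrArg Complex.ofReal hm2R
    have hmpos : 0 < m := Real.sqrt_pos.mpr hapos
    have hmne : (m : ℂ) ≠ 0 := by exact_mod_cast ne_of_gt hmpos
    have ha1C : (1 : ℂ) + a ≠ 0 := by
      intro h
      have : (1 : ℝ) + a = 0 := by exact_mod_cast h
      linarith
    obtain ⟨c, hcdef⟩ : ∃ c : ℂ, c = b / (2 * m) := ⟨_, rfl⟩
    have hconj_c : (starRingEnd ℂ) c = (starRingEnd ℂ) b / (2 * m) := by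
      simp [hcdef, map_div₀, map_ofNat, Complex.conj_ofReal]
    have hcc : c * (starRingEnd ℂ) c = (1 - (a : ℂ)) / 2 := by
      rw [hconj_c, hcdef]
      field_simp
      linear_combination hnorm - (2 * (1 - (a : ℂ))) * hm2
    have h2mc : 2 * (m : ℂ) * c = b := by
      rw [hcdef]; field_simp
    have h2mcc : 2 * (m : ℂ) * (starRingEnd ℂ) c = (starRingEnd ℂ) b := by
      rw [hconj_c]; field_simp
    refine ⟨!![(m : ℂ), c; (starRingEnd ℂ) c, -m], ?_, ?_, ?_⟩
    · ext i j; fin_cases i <;> fin_cases j <;> simp [conjTranspose_apply, Complex.conj_ofReal]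
    · ext i j
      fin_cases i <;> fin_cases j <;> simp [mul_apply, Fin.sum_univ_two]
      · linear_combination hm2 + hcc
      · ring
      · ring
      · linear_combination hm2 + hcc
    · ext i j
      fin_cases i <;> fin_cases j <;> simp [mul_apply, Fin.sum_univ_two, ha, h10, h11, hb.symm]
      · linear_combination hm2 - hcc
      · linear_combination h2mc
      · linear_combination h2mcc
      · linear_combination hcc - hm2

theorem jtp_rank_one_to_zero
    (Φ : Matrix (Fin 2) (Fin 2) ℂ → Matrix (Fin 2) (Fin 2) ℂ)
    (hherm : ∀ A, A.IsHermitian → (Φ A).IsHermitian)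
    (hjtp : ∀ A B, A.IsHermitian → B.IsHermitian → Φ (A * B * A) = Φ A * Φ B * Φ A)
    (h0 : Φ 0 = 0) (h1 : Φ 1 = 1)
    (hJ : Φ (Matrix.diagonal ![(1 : ℂ), -1]) = 1 ∨ Φ (Matrix.diagonal ![(1 : ℂ), -1]) = -1) :
    ∀ A : Matrix (Fin 2) (Fin 2) ℂ, A.IsHermitian → A.rank = 1 → Φ A = 0 := by
  intro A hA hrank
  set J : Matrix (Fin 2) (Fin 2) ℂ := Matrix.diagonal ![(1 : ℂ), -1] with hJdef
  have hJherm : J.IsHermitian := by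
    rw [hJdef, Jmat]
    ext i j; fin_cases i <;> fin_cases j <;> simp [conjTranspose_apply]
  -- determinant is zero since rank = 1 < 2
  have hdet : A.det = 0 := by
    by_contra hne
    have : IsUnit A := A.isUnit_iff_isUnit_det.mpr (isUnit_iff_ne_zero.mpr hne)
    have := A.rank_of_isUnit this
    rw [hrank] at this
    simpa using this
  set d : Fin 2 → ℝ := hA.eigenvalues with hddef
  have hprod : (d 0 : ℂ) * (d 1 : ℂ) = 0 := by
    have := hA.det_eq_prod_eigenvalues
    rw [hdet, Fin.prod_univ_two] at this
    exact this.symm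
  have hd01 : d 0 = 0 ∨ d 1 = 0 := by
    rcases mul_eq_zero.mp hprod with h | h
    · left; exact_mod_cast h
    · right; exact_mod_cast h
  set U : Matrix (Fin 2) (Fin 2) ℂ := (hA.eigenvectorUnitary : Matrix (Fin 2) (Fin 2) ℂ)
    with hUdef
  have hU1 : star U * U = 1 := Matrix.mem_unitaryGroup_iff'.mp (hA.eigenvectorUnitary).2
  have hU2 : U * star U = 1 := Matrix.mem_unitaryGroup_iff.mp (hA.eigenvectorUnitary).2
  have hconjmul : ∀ X Y : Matrix (Fin 2) (Fin 2) ℂ,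
      (U * X * star U) * (U * Y * star U) = U * (X * Y) * star U := by
    intro X Y
    calc (U * X * star U) * (U * Y * star U) = U * X * (star U * U) * Y * star U := by
          simp only [Matrix.mul_assoc]
      _ = U * (X * Y) * star U := by rw [hU1]; simp only [Matrix.mul_one, Matrix.mul_assoc]
  have hconjherm : ∀ X : Matrix (Fin 2) (Fin 2) ℂ, X.IsHermitian →
      (U * X * star U).IsHermitian := by
    intro X hX
    have := Matrix.isHermitian_mul_mul_conjTranspose U hX
    simpa [Matrix.star_eq_conjTranspose, Matrix.mul_assoc] using this
  set e : Fin 2 → ℂ := fun i => if d i = 0 then 0 else 1 with hedef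
  set E : Matrix (Fin 2) (Fin 2) ℂ := Matrix.diagonal e with hEdef
  set X : Matrix (Fin 2) (Fin 2) ℂ := !![0, 1; 1, 0] with hXdef
  have hEherm : E.IsHermitian := by
    rw [hEdef]
    apply Matrix.isHermitian_diagonal_of_self_adjoint
    funext i
    by_cases h : d i = 0 <;> simp [hedef, h, Pi.star_apply]
  have hXherm : X.IsHermitian := by
    rw [hXdef]; ext i j; fin_cases i <;> fin_cases j <;> simp [conjTranspose_apply]
  have he2 : (fun i => e i * e i) = e := by
    funext i; by_cases h : d i = 0 <;> simp [hedef, h]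
  have hEE : E * E = E := by
    rw [hEdef, Matrix.diagonal_mul_diagonal, he2]
  have hXX : X * X = 1 := by
    rw [hXdef]; ext i j; fin_cases i <;> fin_cases j <;> simp [mul_apply, Fin.sum_univ_two]
  have hEXE : E * X * E = 0 := by
    rw [hEdef, hXdef]
    ext i j
    fin_cases i <;> fin_cases j <;>
      rcases hd01 with h | h <;>
      simp [mul_apply, Fin.sum_univ_two, Matrix.diagonal, hedef, h]
  set D : Matrix (Fin 2) (Fin 2) ℂ := Matrix.diagonal (RCLike.ofReal ∘ d) with hDdef
  have hspec : A = U * D * star U := hA.spectral_theorem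
  have heD : (fun i => e i * (RCLike.ofReal ∘ d) i * e i) = RCLike.ofReal ∘ d := by
    funext i; by_cases h : d i = 0 <;> simp [hedef, h]
  have hEDE : E * D * E = D := by
    rw [hEdef, hDdef, Matrix.diagonal_mul_diagonal, Matrix.diagonal_mul_diagonal, heD]
  set Q : Matrix (Fin 2) (Fin 2) ℂ := U * E * star U with hQdef
  set S : Matrix (Fin 2) (Fin 2) ℂ := U * X * star U with hSdef
  have hQherm : Q.IsHermitian := hconjherm E hEherm
  have hSherm : S.IsHermitian := hconjherm X hXherm
  have hQQ : Q * 1 * Q = Q := by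
    rw [mul_one, hQdef, hconjmul, hEE]
  have hQAQ : Q * A * Q = A := by
    rw [hspec, hQdef, hconjmul, hconjmul, hEDE]
  have hQSQ : Q * S * Q = 0 := by
    rw [hQdef, hSdef, hconjmul, hconjmul, hEXE]
    simp
  have hS2 : S * S = 1 := by
    rw [hSdef, hconjmul, hXX, Matrix.mul_one, hU2]
  have hStr : S.trace = 0 := by
    rw [hSdef, Matrix.trace_mul_cycle, hU1, Matrix.one_mul, hXdef]
    simp [Matrix.trace, Fin.sum_univ_two]
  obtain ⟨M, hMherm, hM2, hMJM⟩ := aux_reflection S hSherm hS2 hStr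
  have hPhiM : Φ M * Φ M = 1 := by
    have h := hjtp M 1 hMherm Matrix.isHermitian_one
    rw [Matrix.mul_one, hM2, h1, Matrix.mul_one] at h
    exact h.symm
  have hPhiS : Φ S = 1 ∨ Φ S = -1 := by
    have h := hjtp M J hMherm hJherm
    rw [hMJM] at h
    rcases hJ with hj | hj
    · left; rw [h, hj, Matrix.mul_one, hPhiM]
    · right; rw [h, hj]
      rw [Matrix.mul_neg, Matrix.mul_one, Matrix.neg_mul, hPhiM]
  have hQ2 : Φ Q * Φ Q = 0 := by
    have h := hjtp Q S hQherm hSherm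
    rw [hQSQ, h0] at h
    rcases hPhiS with hs | hs
    · rw [hs, Matrix.mul_one] at h; exact h.symm
    · rw [hs, Matrix.mul_neg, Matrix.mul_one, Matrix.neg_mul] at h
      have := h.symm
      rwa [neg_eq_zero] at this
  have hQ0 : Φ Q = 0 := by
    have h := hjtp Q 1 hQherm Matrix.isHermitian_one
    rw [hQQ, h1, Matrix.mul_one, hQ2] at h
    exact h
  have h := hjtp Q A hQherm hA
  rw [hQAQ, hQ0, Matrix.zero_mul, Matrix.mul_zero] at h
  exact h
end

section
/- Let Φ : H₂(ℂ) → H₂(ℂ) be a J.T.P. homomorphism with Φ(0) = 0 and Φ(I) = I, and suppose there exists A ∈ H₂(ℂ) with rank A = 1 and Φ(A) ≠ 0. Then rank Φ(B) = 1 for every B ∈ H₂(ℂ) with rank B = 1. -/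
open Matrix

abbrev Mat2 := Matrix (Fin 2) (Fin 2) ℂ

lemma outer_mul_outer (u w x y : Fin 2 → ℂ) :
    vecMulVec u w * vecMulVec x y = (w ⬝ᵥ x) • vecMulVec u y := by
  ext i j
  simp [vecMulVec_apply, mul_apply, dotProduct, Fin.sum_univ_two, Matrix.smul_apply]
  ring

lemma outer_herm (v : Fin 2 → ℂ) : (vecMulVec v (star v)).IsHermitian := by
  ext i j
  simp [conjTranspose_apply, vecMulVec_apply, mul_comm]

lemma outer_sym_herm (x y : Fin 2 → ℂ) :
    (vecMulVec x (star y) + vecMulVec y (star x)).IsHermitian := by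
  ext i j
  simp [conjTranspose_apply, vecMulVec_apply, mul_comm, add_comm]

lemma herm_smul_real (t : ℝ) {M : Mat2} (hM : M.IsHermitian) :
    ((t : ℂ) • M).IsHermitian := by
  unfold Matrix.IsHermitian
  rw [conjTranspose_smul, hM.eq]
  simp

lemma sandwich_outer_smul (c : ℂ) (X Y : Mat2) :
    (c • X) * Y * (c • X) = (c * c) • (X * Y * X) := by
  simp only [smul_mul_assoc, mul_smul_comm, smul_smul]

lemma sandwich_smul (c d : ℂ) (X Y : Mat2) :
    (c • X) * (d • Y) * (c • X) = (c * c * d) • (X * Y * X) := by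
  simp only [smul_mul_assoc, mul_smul_comm, smul_smul]
  ring_nf

lemma cancel_sandwich {M X Y : Mat2} (h : IsUnit M.det) (hXY : M * X * M = M * Y * M) :
    X = Y := by
  have e : ∀ Z : Mat2, M⁻¹ * (M * Z * M) * M⁻¹ = Z := by
    intro Z
    rw [← Matrix.mul_assoc M⁻¹ (M * Z) M, ← Matrix.mul_assoc M⁻¹ M Z,
      Matrix.nonsing_inv_mul M h, one_mul, Matrix.mul_assoc, Matrix.mul_nonsing_inv M h,
      mul_one]
  rw [← e X, hXY, e Y]

lemma eq_zero_of_rank_eq_zero {M : Mat2} (h : M.rank = 0) : M = 0 := by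
  have hr : LinearMap.range M.mulVecLin = ⊥ := by
    rw [Matrix.rank] at h
    exact Submodule.finrank_eq_zero.mp h
  have h2 : M.mulVecLin = 0 := LinearMap.range_eq_bot.mp hr
  ext i j
  have h3 : M.mulVec (Pi.single j 1) = 0 := by
    rw [← Matrix.mulVecLin_apply, h2]; rfl
  have h4 := congrFun h3 i
  simpa [Matrix.mulVec, dotProduct, Pi.single_apply] using h4

lemma rank_facts_of_rank_one {B : Mat2} (h : B.rank = 1) : B.det = 0 ∧ B ≠ 0 := by
  constructor
  · by_contra hdet
    have hu : IsUnit B := B.isUnit_iff_isUnit_det.mpr (isUnit_iff_ne_zero.mpr hdet)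
    have := B.rank_of_isUnit hu
    simp [Fintype.card_fin] at this
    omega
  · rintro rfl
    rw [Matrix.rank_zero] at h
    omega

lemma rank_one_of {M : Mat2} (v : Fin 2 → ℂ) (l : ℝ)
    (hM : M = (l : ℂ) • vecMulVec v (star v)) (hM0 : M ≠ 0) : M.rank = 1 := by
  have hle : M.rank ≤ 1 := by
    have heq : M = vecMulVec ((l : ℂ) • v) (star v) := by
      rw [hM]; ext i j; simp [vecMulVec_apply]; ring
    rw [heq, vecMulVec_eq Unit]
    calc (replicateCol Unit ((l:ℂ) • v) * replicateRow Unit (star v)).rank ≤ (replicateCol Unit ((l:ℂ) • v)).rank :=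
          Matrix.rank_mul_le_left _ _
      _ ≤ 1 := by simpa using Matrix.rank_le_card_width (replicateCol Unit ((l:ℂ) • v))
  have hne : M.rank ≠ 0 := fun h => hM0 (eq_zero_of_rank_eq_zero h)
  omega

lemma herm_decomp {B : Mat2} (hB : B.IsHermitian) (hdet : B.det = 0) (hB0 : B ≠ 0) :
    ∃ (v : Fin 2 → ℂ) (l : ℝ), star v ⬝ᵥ v = 1 ∧ l ≠ 0 ∧
      B = (l : ℂ) • vecMulVec v (star v) := by
  obtain ⟨b, h01⟩ : ∃ b : ℂ, B 0 1 = b := ⟨_, rfl⟩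
  have h10 : B 1 0 = starRingEnd ℂ b := by
    have := congrFun (congrFun hB.eq 1) 0
    simpa [conjTranspose_apply, h01] using this.symm
  obtain ⟨a, h00⟩ : ∃ a : ℝ, (a : ℂ) = B 0 0 := by
    have := congrFun (congrFun hB.eq 0) 0
    simp [conjTranspose_apply] at this
    exact ⟨(B 0 0).re, Complex.conj_eq_iff_re.mp this⟩
  obtain ⟨d, h11⟩ : ∃ d : ℝ, (d : ℂ) = B 1 1 := by
    have := congrFun (congrFun hB.eq 1) 1
    simp [conjTranspose_apply] at this
    exact ⟨(B 1 1).re, Complex.conj_eq_iff_re.mp this⟩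
  have hdet2 : (a : ℂ) * (d : ℂ) = b * starRingEnd ℂ b := by
    rw [Matrix.det_fin_two, ← h00, ← h11, h01, h10] at hdet
    linear_combination hdet
  have had : a * d = Complex.normSq b := by
    have : ((a * d : ℝ) : ℂ) = (Complex.normSq b : ℂ) := by
      push_cast
      rw [hdet2, Complex.mul_conj]
    exact_mod_cast this
  have hBzero : a = 0 → d = 0 → b = 0 → False := by
    intro ha0 hd0 hb0
    apply hB0
    ext i j
    fin_cases i <;> fin_cases j <;>
      simp [← h00, ← h11, h01, h10, ha0, hd0, hb0]
  have ht : a + d ≠ 0 := by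
    intro h
    have hd' : d = -a := by linarith
    have hnn := Complex.normSq_nonneg b
    rw [← had, hd'] at hnn
    have ha0 : a = 0 := by nlinarith
    have hd0 : d = 0 := by rw [hd', ha0, neg_zero]
    have hb0 : b = 0 := Complex.normSq_eq_zero.mp (by rw [← had, ha0, zero_mul])
    exact hBzero ha0 hd0 hb0
  set t : ℝ := a + d with htdef
  by_cases haz : a = 0
  · have hb0 : b = 0 := Complex.normSq_eq_zero.mp (by rw [← had, haz, zero_mul])
    refine ⟨![0, 1], d, by simp [dotProduct, Fin.sum_univ_two], by
      rw [htdef, haz, zero_add] at ht; exact ht, ?_⟩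
    ext i j
    fin_cases i <;> fin_cases j <;> simp only [Matrix.smul_apply, vecMulVec_apply] <;>
      simp [vecMulVec_apply, ← h00, ← h11, h01, h10, haz, hb0]
  · have hat : 0 < a / t := by
      have h1 : 0 < a * t := by
        have h2 : a * t = a * a + a * d := by rw [htdef]; ring
        have h3 : 0 ≤ a * d := by rw [had]; exact Complex.normSq_nonneg b
        have h4 : 0 < a * a := mul_self_pos.mpr haz
        linarith
      rcases lt_or_gt_of_ne (show t ≠ 0 from ht) with h | h
      · exact div_pos_of_neg_of_neg (by nlinarith) h
      · exact div_pos (by nlinarith) h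
    set w : ℝ := Real.sqrt (a / t) with hw
    have hw0 : 0 < w := Real.sqrt_pos.mpr hat
    have hw2 : w * w = a / t := Real.mul_self_sqrt hat.le
    have hwc : ((w : ℂ)) ≠ 0 := by exact_mod_cast hw0.ne'
    have htc : ((t : ℂ)) ≠ 0 := by exact_mod_cast ht
    have hw2c : (w : ℂ) * (w : ℂ) * (t : ℂ) = (a : ℂ) := by
      have : ((w * w * t : ℝ) : ℂ) = ((a : ℝ) : ℂ) := by
        rw [hw2]; push_cast; field_simp
      exact_mod_cast this
    have hac : ((a : ℂ)) ≠ 0 := by exact_mod_cast haz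
    refine ⟨![(w : ℂ), starRingEnd ℂ b / ((t : ℂ) * w)], t, ?_, ht, ?_⟩
    · simp only [dotProduct, Fin.sum_univ_two, Matrix.cons_val_zero, Matrix.cons_val_one,
        Matrix.head_cons, Pi.star_apply, RCLike.star_def, map_div₀, _root_.map_mul,
        Complex.conj_conj, Complex.conj_ofReal]
      have htc2 : ((t : ℝ) : ℂ) = (a : ℂ) + (d : ℂ) := by rw [htdef]; push_cast; ring
      field_simp
      linear_combination (↑w * ↑w * ↑t + ↑a - ↑t) * hw2c - (↑a : ℂ) * htc2 - hdet2
    · have htc2 : ((t : ℝ) : ℂ) = (a : ℂ) + (d : ℂ) := by rw [htdef]; push_cast; ring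
      ext i j
      fin_cases i <;> fin_cases j <;>
        simp only [Fin.zero_eta, Fin.mk_one, Matrix.smul_apply, vecMulVec_apply, Matrix.cons_val_zero,
          Matrix.cons_val_one, Matrix.head_cons, Pi.star_apply, RCLike.star_def,
          map_div₀, _root_.map_mul, Complex.conj_conj, Complex.conj_ofReal, smul_eq_mul,
          Matrix.cons_val', Matrix.cons_val_fin_one, Matrix.empty_val']
      · rw [← h00]; linear_combination -hw2c
      · rw [h01]; field_simp
      · rw [h10]; field_simp
      · rw [← h11]; field_simp
        linear_combination (↑d : ℂ) * hw2c + hdet2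

theorem jtp_nondegenerate_rank_one
    (Φ : Matrix (Fin 2) (Fin 2) ℂ → Matrix (Fin 2) (Fin 2) ℂ)
    (hherm : ∀ A, A.IsHermitian → (Φ A).IsHermitian)
    (hjtp : ∀ A B, A.IsHermitian → B.IsHermitian → Φ (A * B * A) = Φ A * Φ B * Φ A)
    (h0 : Φ 0 = 0) (h1 : Φ 1 = 1)
    (hnd : ∃ A : Matrix (Fin 2) (Fin 2) ℂ, A.IsHermitian ∧ A.rank = 1 ∧ Φ A ≠ 0) :
    ∀ B : Matrix (Fin 2) (Fin 2) ℂ, B.IsHermitian → B.rank = 1 → (Φ B).rank = 1 := by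
  intro B hB hrank
  obtain ⟨hdetB, hB0⟩ := rank_facts_of_rank_one hrank
  obtain ⟨v, l, hv, hl, hBeq⟩ := herm_decomp hB hdetB hB0
  set P : Mat2 := vecMulVec v (star v) with hPdef
  have hPP : P * P = P := by rw [hPdef, outer_mul_outer, hv, one_smul]
  have hPPP : P * P * P = P := by rw [hPP, hPP]
  have hermP : P.IsHermitian := outer_herm v
  have lcne : ((l : ℝ) : ℂ) ≠ 0 := Complex.ofReal_ne_zero.mpr hl
  have hv' : starRingEnd ℂ (v 0) * v 0 + starRingEnd ℂ (v 1) * v 1 = 1 := by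
    simpa [dotProduct, Fin.sum_univ_two] using hv
  set q : Fin 2 → ℂ := ![-(starRingEnd ℂ (v 1)), starRingEnd ℂ (v 0)] with hqdef
  have hq : star q ⬝ᵥ q = 1 := by
    simp only [hqdef, dotProduct, Fin.sum_univ_two, Pi.star_apply, Matrix.cons_val_zero,
      Matrix.cons_val_one, Matrix.head_cons, RCLike.star_def, map_neg, Complex.conj_conj]
    linear_combination hv'
  have hvq : star v ⬝ᵥ q = 0 := by
    simp only [hqdef, dotProduct, Fin.sum_univ_two, Pi.star_apply, Matrix.cons_val_zero,
      Matrix.cons_val_one, Matrix.head_cons, RCLike.star_def]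
    ring
  have hqv : star q ⬝ᵥ v = 0 := by
    simp only [hqdef, dotProduct, Fin.sum_univ_two, Pi.star_apply, Matrix.cons_val_zero,
      Matrix.cons_val_one, Matrix.head_cons, RCLike.star_def, map_neg, Complex.conj_conj]
    ring
  set Q : Mat2 := vecMulVec q (star q) with hQdef
  have hermQ : Q.IsHermitian := outer_herm q
  -- Part 1 : Φ B ≠ 0
  have hMne : Φ B ≠ 0 := by
    intro hM0
    obtain ⟨A, hAH, hArank, hA0⟩ := hnd
    obtain ⟨hdetA, hA0'⟩ := rank_facts_of_rank_one hArank
    obtain ⟨r, m, hr, hm, hAeq⟩ := herm_decomp hAH hdetA hA0'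
    set R : Mat2 := vecMulVec r (star r) with hRdef
    have hRR : R * R = R := by rw [hRdef, outer_mul_outer, hr, one_smul]
    have hermR : R.IsHermitian := outer_herm r
    have hPhiP : ∀ t : ℝ, Φ ((t : ℂ) • P) = 0 := by
      intro t
      have hsc : ((l : ℝ) : ℂ) * ((l : ℝ) : ℂ) * (((t / l ^ 2 : ℝ) : ℂ)) = ((t : ℝ) : ℂ) := by
        push_cast
        field_simp
      have hX : B * ((((t / l ^ 2 : ℝ) : ℂ)) • P) * B = (t : ℂ) • P := by
        rw [hBeq, sandwich_smul, hPPP, hsc]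
      have h := hjtp B ((((t / l ^ 2 : ℝ) : ℂ)) • P) hB (herm_smul_real _ hermP)
      rw [hX, hM0] at h
      rw [h]
      simp
    have hP1 : Φ P = 0 := by
      have := hPhiP 1
      simpa using this
    have hrv : star r ⬝ᵥ v = starRingEnd ℂ (star v ⬝ᵥ r) := by
      simp only [dotProduct, Fin.sum_univ_two, Pi.star_apply, RCLike.star_def, map_add,
        _root_.map_mul, Complex.conj_conj]
      ring
    by_cases hcase : star v ⬝ᵥ r = 0
    · have hrv0 : star r ⬝ᵥ v = 0 := by rw [hrv, hcase, map_zero]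
      set S : Mat2 := vecMulVec r (star v) + vecMulVec v (star r) with hSdef
      have hermS : S.IsHermitian := outer_sym_herm r v
      have hSPS : S * P * S = R := by
        rw [hSdef, hPdef, hRdef]
        simp only [add_mul, mul_add, outer_mul_outer, hv, hcase, hrv0, one_smul, zero_smul,
          add_zero, zero_add, smul_mul_assoc, mul_smul_comm, smul_smul, smul_zero, zero_mul,
          mul_zero]
      have h := hjtp S P hermS hermP
      rw [hSPS, hP1] at h
      have hPhiR : Φ R = 0 := by rw [h]; simp
      have hRAR : R * A * R = A := by
        rw [hAeq]
        simp only [mul_smul_comm, smul_mul_assoc, hRR]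
      have h2 := hjtp R A hermR hAH
      rw [hRAR, hPhiR] at h2
      exact hA0 (by rw [h2]; simp)
    · set s : ℝ := Complex.normSq (star v ⬝ᵥ r) with hsdef
      have hs : s ≠ 0 := by simpa [hsdef, Complex.normSq_eq_zero] using hcase
      have hscne : ((s : ℝ) : ℂ) ≠ 0 := Complex.ofReal_ne_zero.mpr hs
      have hRPR : R * P * R = ((s : ℝ) : ℂ) • R := by
        rw [hRdef, hPdef]
        rw [outer_mul_outer, smul_mul_assoc, outer_mul_outer, smul_smul, hrv]
        congr 1
        rw [mul_comm, Complex.mul_conj]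
      have h := hjtp R P hermR hermP
      rw [hRPR, hP1] at h
      have hPhisR : Φ (((s : ℝ) : ℂ) • R) = 0 := by rw [h]; simp
      have hsc2 : ((s : ℝ) : ℂ) * ((s : ℝ) : ℂ) * (((m / s ^ 2 : ℝ) : ℂ)) = ((m : ℝ) : ℂ) := by
        push_cast
        field_simp
      have key : (((s : ℝ) : ℂ) • R) * ((((m / s ^ 2 : ℝ) : ℂ)) • R) * (((s : ℝ) : ℂ) • R)
          = A := by
        rw [sandwich_smul, hRR, hRR, hsc2, hAeq]
      have h2 := hjtp (((s : ℝ) : ℂ) • R) ((((m / s ^ 2 : ℝ) : ℂ)) • R)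
        (herm_smul_real _ hermR) (herm_smul_real _ hermR)
      rw [key, hPhisR] at h2
      exact hA0 (by rw [h2]; simp)
  -- Part 2 : det (Φ B) = 0
  have hdetM : (Φ B).det = 0 := by
    by_contra hdm
    have hu : IsUnit (Φ B).det := isUnit_iff_ne_zero.mpr hdm
    have hBPB : B * P * B = B * 1 * B := by
      rw [hBeq, sandwich_outer_smul, sandwich_outer_smul]
      simp only [hPP, mul_one]
    have e1 := hjtp B P hB hermP
    have e2 := hjtp B 1 hB Matrix.isHermitian_one
    rw [hBPB] at e1
    have hPhiPeq : Φ P = 1 := by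
      apply cancel_sandwich hu
      rw [← e1, e2, h1]
    have hBQB : B * Q * B = 0 := by
      rw [hBeq, sandwich_outer_smul, hPdef, hQdef]
      rw [outer_mul_outer, hvq, zero_smul, zero_mul, smul_zero]
    have e3 := hjtp B Q hB hermQ
    rw [hBQB, h0] at e3
    have hPhiQ : Φ Q = 0 := by
      apply cancel_sandwich hu
      rw [← e3]
      simp
    set T : Mat2 := vecMulVec v (star q) + vecMulVec q (star v) with hTdef
    have hermT : T.IsHermitian := outer_sym_herm v q
    have hTQT : T * Q * T = P := by
      rw [hTdef, hQdef, hPdef]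
      simp only [add_mul, mul_add, outer_mul_outer, hq, hvq, hqv, one_smul, zero_smul,
        add_zero, zero_add, smul_mul_assoc, mul_smul_comm, smul_smul, smul_zero, zero_mul,
        mul_zero]
    have e4 := hjtp T Q hermT hermQ
    rw [hTQT, hPhiPeq, hPhiQ] at e4
    simp only [mul_zero, zero_mul] at e4
    exact one_ne_zero e4
  obtain ⟨v', l', hv2, hl2, hMeq⟩ := herm_decomp (hherm B hB) hdetM hMne
  exact rank_one_of v' l' hMeq hMne
end

section
/- Let Φ : H₂(ℂ) → H₂(ℂ) be a J.T.P. homomorphism with Φ(0) = 0 and Φ(I) = I, and suppose there exists λ ∈ ℝ such that Φ(λI) is not a scalar matrix. Then there is a unitary U ∈ M₂(ℂ) and J.T.P. homomorphisms φ₁, φ₂ : H₂(ℂ) → ℝ such that Φ(A) = U · diag(φ₁(A), φ₂(A)) · U* for all A ∈ H₂(ℂ). -/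
open Matrix

local notation "M2" => Matrix (Fin 2) (Fin 2) ℂ

lemma herm_rsmul (r : ℝ) (A : M2) (hA : A.IsHermitian) :
    ((r : ℂ) • A).IsHermitian := by
  unfold Matrix.IsHermitian at *
  rw [conjTranspose_smul, hA, Complex.star_def, Complex.conj_ofReal]

lemma herm_rsmul_one (r : ℝ) : ((r : ℂ) • (1 : M2)).IsHermitian :=
  herm_rsmul r 1 Matrix.isHermitian_one

lemma herm_mul_self (A : M2) (hA : A.IsHermitian) : (A*A).IsHermitian := by
  unfold Matrix.IsHermitian at *
  rw [conjTranspose_mul, hA]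

lemma scal_sandwich (r : ℝ) (B : M2) :
    ((r:ℂ) • (1 : M2)) * B * ((r:ℂ) • 1) = ((r*r : ℝ):ℂ) • B := by
  push_cast
  rw [smul_mul_assoc, smul_mul_assoc, mul_smul_comm, one_mul, mul_one, smul_smul]

lemma cal_mul (V : M2) (hV1 : star V * V = 1) (f g : Fin 2 → ℂ) :
    (V * Matrix.diagonal f * star V) * (V * Matrix.diagonal g * star V)
      = V * Matrix.diagonal (fun i => f i * g i) * star V := by
  have hc : ∀ X : M2, star V * (V * X) = X := by
    intro X; rw [← Matrix.mul_assoc, hV1, Matrix.one_mul]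
  simp only [Matrix.mul_assoc, hc]
  rw [← Matrix.mul_assoc (Matrix.diagonal f) (Matrix.diagonal g) (star V),
    Matrix.diagonal_mul_diagonal]

lemma cal_herm (V : M2) (f : Fin 2 → ℝ) :
    (V * Matrix.diagonal (fun i => ((f i : ℝ):ℂ)) * star V).IsHermitian := by
  unfold Matrix.IsHermitian
  rw [conjTranspose_mul, conjTranspose_mul, Matrix.diagonal_conjTranspose]
  have : star (fun i => ((f i : ℝ):ℂ)) = fun i => ((f i : ℝ):ℂ) := by
    funext i
    simp [Complex.star_def, Complex.conj_ofReal]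
  rw [this, star_eq_conjTranspose, conjTranspose_conjTranspose, ← star_eq_conjTranspose,
    Matrix.mul_assoc]

theorem key_diag (Ψ : M2 → M2)
    (hherm : ∀ A : M2, A.IsHermitian → (Ψ A).IsHermitian)
    (hjtp : ∀ A B : M2, A.IsHermitian → B.IsHermitian → Ψ (A * B * A) = Ψ A * Ψ B * Ψ A)
    (h1 : Ψ 1 = 1)
    (l α β : ℝ) (hab : α ≠ β)
    (hD : Ψ ((l : ℂ) • 1) = Matrix.diagonal ![(α:ℂ), (β:ℂ)]) :
    ∀ A : M2, A.IsHermitian → Ψ A 0 1 = 0 := by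
  set D : M2 := Matrix.diagonal ![(α:ℂ), (β:ℂ)] with hDdef
  have hsand : ∀ B : M2, B.IsHermitian → Ψ (((l*l : ℝ):ℂ) • B) = D * Ψ B * D := by
    intro B hB
    rw [← scal_sandwich, hjtp _ _ (herm_rsmul_one l) hB, hD]
  have hD2 : Ψ (((l*l : ℝ):ℂ) • 1) = D * D := by
    rw [hsand 1 Matrix.isHermitian_one, h1, Matrix.mul_one]
  have hD3 : Ψ (((l*(l*l) : ℝ):ℂ) • 1) = D * D * D := by
    have e : ((l:ℂ) • (1:M2)) * (((l:ℂ)) • 1) * ((l:ℂ) • 1) = ((l*(l*l) : ℝ):ℂ) • 1 := by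
      push_cast
      simp only [smul_mul_assoc, mul_smul_comm, one_mul, mul_one, smul_smul]
    rw [← e, hjtp _ _ (herm_rsmul_one l) (herm_rsmul_one l), hD]
  have hsq' : ∀ A : M2, A.IsHermitian → Ψ (A * A) = Ψ A * Ψ A := by
    intro A hA
    have e := hjtp A 1 hA Matrix.isHermitian_one
    rwa [Matrix.mul_one, h1, Matrix.mul_one] at e
  have hXDX : ∀ A : M2, A.IsHermitian → Ψ ((l:ℂ) • (A*A)) = Ψ A * D * Ψ A := by
    intro A hA
    have e : A * ((l:ℂ) • 1) * A = (l:ℂ) • (A*A) := by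
      rw [mul_smul_comm, mul_one, smul_mul_assoc]
    rw [← e, hjtp _ _ hA (herm_rsmul_one l), hD]
  have hI : ∀ A : M2, A.IsHermitian → Ψ A * (D*D) * Ψ A = D * (Ψ A * Ψ A) * D := by
    intro A hA
    have e1 : A * (((l*l : ℝ):ℂ) • 1) * A = ((l*l : ℝ):ℂ) • (A*A) := by
      rw [mul_smul_comm, mul_one, smul_mul_assoc]
    calc Ψ A * (D*D) * Ψ A = Ψ (A * (((l*l : ℝ):ℂ) • 1) * A) := by
          rw [hjtp _ _ hA (herm_rsmul_one _), hD2]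
      _ = Ψ (((l*l : ℝ):ℂ) • (A*A)) := by rw [e1]
      _ = D * (Ψ A * Ψ A) * D := by
          rw [hsand _ (herm_mul_self A hA), hsq' A hA]
  have hIII : ∀ A : M2, A.IsHermitian → Ψ A * (D*(D*D)) * Ψ A = D * (Ψ A * D * Ψ A) * D := by
    intro A hA
    have e1 : A * (((l*(l*l) : ℝ):ℂ) • 1) * A = ((l*(l*l) : ℝ):ℂ) • (A*A) := by
      rw [mul_smul_comm, mul_one, smul_mul_assoc]
    have e2 : ((l*l : ℝ):ℂ) • ((l:ℂ) • (A*A)) = ((l*(l*l) : ℝ):ℂ) • (A*A) := by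
      rw [smul_smul]
      congr 1
      push_cast
      ring
    calc Ψ A * (D*(D*D)) * Ψ A = Ψ (A * (((l*(l*l) : ℝ):ℂ) • 1) * A) := by
          rw [hjtp _ _ hA (herm_rsmul_one _), hD3, Matrix.mul_assoc D D D]
      _ = Ψ (((l*l : ℝ):ℂ) • ((l:ℂ) • (A*A))) := by rw [e1, e2]
      _ = D * (Ψ A * D * Ψ A) * D := by
          rw [hsand _ (herm_rsmul l _ (herm_mul_self A hA)), hXDX A hA]
  rcases eq_or_ne (α + β) 0 with hsum | hsum
  · -- case β = -α
    have hβ : (β:ℂ) = -(α:ℂ) := by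
      have : β = -α := by linarith [hsum]
      rw [this]; push_cast; ring
    have hα : (α:ℂ) ≠ 0 := by
      simp only [ne_eq, Complex.ofReal_eq_zero]
      intro h0
      apply hab
      rw [h0]; linarith
    have dich1 : ∀ A : M2, A.IsHermitian →
        Ψ A 0 1 * (Ψ A 0 0 + Ψ A 1 1) = 0 := by
      intro A hA
      have h := congrFun (congrFun (hI A hA) 0) 1
      simp only [hDdef, Matrix.mul_apply, Fin.sum_univ_two, Matrix.diagonal_apply,
        Matrix.cons_val_zero, Matrix.cons_val_one, Matrix.head_cons, if_true, if_false,
        Fin.zero_eq_one_iff, Fin.one_eq_zero_iff, ne_eq, OfNat.ofNat_ne_one, not_false_eq_true,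
        mul_zero, zero_mul, add_zero, zero_add, mul_one, one_mul] at h
      rw [hβ] at h
      have h2 : (2*(α:ℂ)^2) * (Ψ A 0 1 * (Ψ A 0 0 + Ψ A 1 1)) = 0 := by
        linear_combination h
      rcases mul_eq_zero.1 h2 with h3 | h3
      · exfalso; apply hα
        have := mul_eq_zero.1 h3
        simpa [pow_eq_zero_iff] using this
      · exact h3
    have dich2 : ∀ A : M2, A.IsHermitian →
        Ψ A 0 1 * (Ψ A 0 0 - Ψ A 1 1) = 0 := by
      intro A hA
      have h := congrFun (congrFun (hIII A hA) 0) 1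
      simp only [hDdef, Matrix.mul_apply, Fin.sum_univ_two, Matrix.diagonal_apply,
        Matrix.cons_val_zero, Matrix.cons_val_one, Matrix.head_cons, if_true, if_false,
        Fin.zero_eq_one_iff, Fin.one_eq_zero_iff, ne_eq, OfNat.ofNat_ne_one, not_false_eq_true,
        mul_zero, zero_mul, add_zero, zero_add, mul_one, one_mul] at h
      rw [hβ] at h
      have h2 : (2*(α:ℂ)^3) * (Ψ A 0 1 * (Ψ A 0 0 - Ψ A 1 1)) = 0 := by
        linear_combination h
      rcases mul_eq_zero.1 h2 with h3 | h3
      · exfalso; apply hα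
        have := mul_eq_zero.1 h3
        simpa [pow_eq_zero_iff] using this
      · exact h3
    have hsqdiag : ∀ A : M2, A.IsHermitian → (Ψ A * Ψ A) 0 1 = 0 := by
      intro A hA
      have := dich1 A hA
      simp only [Matrix.mul_apply, Fin.sum_univ_two]
      linear_combination this
    have hKdiag : ∀ K : M2, K.IsHermitian → K * K = 1 → Ψ K 0 1 = 0 := by
      intro K hK hK2
      have hsq1 : (1 : M2) = Ψ K * Ψ K := by
        have e := hjtp K 1 hK Matrix.isHermitian_one
        rw [Matrix.mul_one, hK2, h1, Matrix.mul_one] at e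
        exact e
      have hDK : D = Ψ K * D * Ψ K := by
        have e := hjtp K ((l:ℂ) • 1) hK (herm_rsmul_one l)
        have earg : K * ((l:ℂ) • 1) * K = (l:ℂ) • 1 := by
          rw [mul_smul_comm, mul_one, smul_mul_assoc, hK2]
        rw [earg, hD] at e
        exact e
      by_contra hne
      have h00 : Ψ K 0 0 = 0 ∧ Ψ K 1 1 = 0 := by
        have e1 := dich1 K hK
        have e2 := dich2 K hK
        have f1 : Ψ K 0 0 + Ψ K 1 1 = 0 := by
          rcases mul_eq_zero.1 e1 with h | h
          · exact absurd h hne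
          · exact h
        have f2 : Ψ K 0 0 - Ψ K 1 1 = 0 := by
          rcases mul_eq_zero.1 e2 with h | h
          · exact absurd h hne
          · exact h
        constructor <;> [linear_combination (f1 + f2)/2; linear_combination (f1 - f2)/2]
      have p1 := congrFun (congrFun hsq1 0) 0
      have p2 := congrFun (congrFun hDK 0) 0
      simp only [hDdef, Matrix.mul_apply, Fin.sum_univ_two, Matrix.diagonal_apply,
        Matrix.one_apply, Matrix.cons_val_zero, Matrix.cons_val_one, Matrix.head_cons,
        if_true, if_false, Fin.zero_eq_one_iff, Fin.one_eq_zero_iff, ne_eq,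
        OfNat.ofNat_ne_one, not_false_eq_true,
        mul_zero, zero_mul, add_zero, zero_add, mul_one, one_mul, h00.1, h00.2] at p1 p2
      rw [hβ] at p2
      apply hα
      have : (α:ℂ) = -(α:ℂ) := by linear_combination p2 + (α:ℂ) * p1
      linear_combination this/2
    -- final: every hermitian A
    intro A hA
    have spec := hA.spectral_theorem
    set V : M2 := (hA.eigenvectorUnitary : M2) with hVdef
    have hVmem := hA.eigenvectorUnitary.2
    have hV1 : star V * V = 1 := (Unitary.mem_iff.mp hVmem).1
    set d : Fin 2 → ℝ := hA.eigenvalues with hddef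
    set g : Fin 2 → ℝ := fun i => Real.sqrt (Real.sqrt |d i|) with hgdef
    set s : Fin 2 → ℝ := fun i => if 0 ≤ d i then 1 else -1 with hsdef
    set G : M2 := V * Matrix.diagonal (fun i => ((g i : ℝ):ℂ)) * star V with hGdef
    set K : M2 := V * Matrix.diagonal (fun i => ((s i : ℝ):ℂ)) * star V with hKdef
    have hGherm : G.IsHermitian := cal_herm V g
    have hKherm : K.IsHermitian := cal_herm V s
    have hK2 : K * K = 1 := by
      rw [hKdef, cal_mul V hV1]
      have : (fun i => ((s i : ℝ):ℂ) * ((s i : ℝ):ℂ)) = fun _ => (1:ℂ) := by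
        funext i
        rw [hsdef]
        by_cases hdi : 0 ≤ d i <;> simp [hdi]
      rw [this, Matrix.diagonal_one, Matrix.mul_one, (Unitary.mem_iff.mp hVmem).2]
    have hHKH : (G * G) * K * (G * G) = A := by
      rw [hGdef, hKdef, cal_mul V hV1, cal_mul V hV1, cal_mul V hV1]
      rw [spec, Unitary.conjStarAlgAut_apply]
      have hfun : (fun i => ((g i : ℝ):ℂ) * ((g i : ℝ):ℂ) * ((s i : ℝ):ℂ) * (((g i : ℝ):ℂ) * ((g i : ℝ):ℂ)))
          = (RCLike.ofReal ∘ d : Fin 2 → ℂ) := by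
        funext i
        show ((g i : ℝ):ℂ) * (g i : ℝ) * (s i : ℝ) * ((g i : ℝ) * (g i : ℝ)) = ((d i : ℝ):ℂ)
        have hgg : g i * g i = Real.sqrt |d i| := Real.mul_self_sqrt (Real.sqrt_nonneg _)
        have hss : Real.sqrt |d i| * s i * Real.sqrt |d i| = d i := by
          rw [hsdef]
          by_cases hdi : 0 ≤ d i
          · simp only [hdi, if_true, mul_one]
            rw [Real.mul_self_sqrt (abs_nonneg _), abs_of_nonneg hdi]
          · simp only [hdi, if_false]
            have he : Real.sqrt |d i| * -1 * Real.sqrt |d i|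
                = -(Real.sqrt |d i| * Real.sqrt |d i|) := by ring
            rw [he, Real.mul_self_sqrt (abs_nonneg _), abs_of_neg (lt_of_not_ge hdi)]
            ring
        have hc : ((g i : ℝ):ℂ) * (g i : ℝ) * (s i : ℝ) * ((g i : ℝ) * (g i : ℝ))
            = (((g i * g i) * s i * (g i * g i) : ℝ) : ℂ) := by push_cast; ring
        rw [hc, hgg]
        rw [show ((Real.sqrt |d i| * s i * Real.sqrt |d i| : ℝ):ℂ) = ((d i : ℝ):ℂ) from by rw [hss]]
      rw [hfun]
    have hΨA : Ψ A = (Ψ G * Ψ G) * Ψ K * (Ψ G * Ψ G) := by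
      rw [← hHKH, hjtp _ _ (herm_mul_self G hGherm) hKherm, hsq' G hGherm]
    have p0 : (Ψ G * Ψ G) 0 1 = 0 := hsqdiag G hGherm
    have p0' : (Ψ G * Ψ G) 1 0 = 0 := by
      have hh : (Ψ G * Ψ G).IsHermitian := herm_mul_self _ (hherm G hGherm)
      have := hh.apply 1 0
      rw [p0] at this
      rw [← this]
      simp
    have q0 : Ψ K 0 1 = 0 := hKdiag K hKherm hK2
    have q0' : Ψ K 1 0 = 0 := by
      have := (hherm K hKherm).apply 1 0
      rw [q0] at this
      rw [← this]
      simp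
    rw [hΨA]
    set P : M2 := Ψ G * Ψ G with hP
    set Q : M2 := Ψ K with hQ
    simp only [Matrix.mul_apply, Fin.sum_univ_two, p0, p0', q0, q0', mul_zero, zero_mul,
      add_zero, zero_add]
  · -- case α + β ≠ 0
    intro A hA
    have h := congrFun (congrFun (hI A hA) 0) 0
    simp only [hDdef, Matrix.mul_apply, Fin.sum_univ_two, Matrix.diagonal_apply,
      Matrix.cons_val_zero, Matrix.cons_val_one, Matrix.head_cons, if_true, if_false,
      Fin.zero_eq_one_iff, Fin.one_eq_zero_iff, ne_eq, OfNat.ofNat_ne_one, not_false_eq_true,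
      mul_zero, zero_mul, add_zero, zero_add, mul_one, one_mul] at h
    have h2 : ((β:ℂ)*(β:ℂ) - (α:ℂ)*(α:ℂ)) * (Ψ A 0 1 * Ψ A 1 0) = 0 := by
      linear_combination h
    have hne : ((β:ℂ)*(β:ℂ) - (α:ℂ)*(α:ℂ)) ≠ 0 := by
      intro hz
      have : ((β - α : ℝ):ℂ) * ((β + α : ℝ):ℂ) = 0 := by push_cast; linear_combination hz
      rcases mul_eq_zero.1 this with hz2 | hz2
      · exact hab (by have := Complex.ofReal_eq_zero.1 hz2; linarith)
      · exact hsum (by have := Complex.ofReal_eq_zero.1 hz2; linarith)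
    have h3 : Ψ A 0 1 * Ψ A 1 0 = 0 := by
      rcases mul_eq_zero.1 h2 with h' | h'
      · exact absurd h' hne
      · exact h'
    have hst : Ψ A 1 0 = star (Ψ A 0 1) := ((hherm A hA).apply 1 0).symm
    rw [hst, Complex.star_def, Complex.mul_conj] at h3
    have := Complex.normSq_eq_zero.1 (by exact_mod_cast h3)
    exact this

theorem jtp_nonscalar_image_of_scalar_diagonalizes
    (Φ : Matrix (Fin 2) (Fin 2) ℂ → Matrix (Fin 2) (Fin 2) ℂ)
    (hherm : ∀ A, A.IsHermitian → (Φ A).IsHermitian)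
    (hjtp : ∀ A B, A.IsHermitian → B.IsHermitian → Φ (A * B * A) = Φ A * Φ B * Φ A)
    (h0 : Φ 0 = 0) (h1 : Φ 1 = 1)
    (hns : ∃ l : ℝ, ¬ ∃ c : ℝ, Φ ((l : ℂ) • 1) = (c : ℂ) • 1) :
    ∃ U ∈ Matrix.unitaryGroup (Fin 2) ℂ, ∃ φ₁ φ₂ : Matrix (Fin 2) (Fin 2) ℂ → ℝ,
      (∀ A B, A.IsHermitian → B.IsHermitian → φ₁ (A * B * A) = φ₁ A * φ₁ B * φ₁ A) ∧
      (∀ A B, A.IsHermitian → B.IsHermitian → φ₂ (A * B * A) = φ₂ A * φ₂ B * φ₂ A) ∧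
      ∀ A, A.IsHermitian →
        Φ A = U * Matrix.diagonal ![(φ₁ A : ℂ), (φ₂ A : ℂ)] * star U := by
  obtain ⟨l, hl⟩ := hns
  have hM : (Φ ((l:ℂ) • 1)).IsHermitian := hherm _ (herm_rsmul_one l)
  set U : M2 := (hM.eigenvectorUnitary : M2) with hUdef
  have hUmem := hM.eigenvectorUnitary.2
  have hU1 : star U * U = 1 := (Unitary.mem_iff.mp hUmem).1
  have hU2 : U * star U = 1 := (Unitary.mem_iff.mp hUmem).2
  set α : ℝ := hM.eigenvalues 0 with hadef
  set β : ℝ := hM.eigenvalues 1 with hbdef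
  have hc2 : ∀ X : M2, U * (star U * X) = X := by
    intro X; rw [← Matrix.mul_assoc, hU2, Matrix.one_mul]
  have hc1 : ∀ X : M2, star U * (U * X) = X := by
    intro X; rw [← Matrix.mul_assoc, hU1, Matrix.one_mul]
  have hab : α ≠ β := by
    intro h
    apply hl
    refine ⟨α, ?_⟩
    rw [hM.spectral_theorem, Unitary.conjStarAlgAut_apply, ← hUdef]
    have he : Matrix.diagonal (RCLike.ofReal ∘ hM.eigenvalues) = (α:ℂ) • (1 : M2) := by
      have hf : (RCLike.ofReal ∘ hM.eigenvalues : Fin 2 → ℂ) = fun _ => (α:ℂ) := by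
        funext i
        fin_cases i
        · rfl
        · exact congrArg Complex.ofReal h.symm
      rw [hf]
      funext i j
      by_cases hij : i = j
      · subst hij
        simp [Matrix.diagonal_apply_eq, Matrix.one_apply]
      · simp [Matrix.diagonal_apply_ne _ hij, Matrix.one_apply_ne hij]
    rw [he, mul_smul_comm, smul_mul_assoc, Matrix.mul_one, hU2]
  set Ψ : M2 → M2 := fun A => star U * Φ A * U with hΨdef
  have hΨherm : ∀ A : M2, A.IsHermitian → (Ψ A).IsHermitian := by
    intro A hA
    have h2 : (star U * Φ A * U).IsHermitian := by
      unfold Matrix.IsHermitian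
      rw [conjTranspose_mul, conjTranspose_mul, (hherm A hA).eq, ← star_eq_conjTranspose,
        ← star_eq_conjTranspose, star_star, ← Matrix.mul_assoc]
    exact h2
  have hΨjtp : ∀ A B : M2, A.IsHermitian → B.IsHermitian →
      Ψ (A * B * A) = Ψ A * Ψ B * Ψ A := by
    intro A B hA hB
    show star U * Φ (A*B*A) * U = (star U * Φ A * U) * (star U * Φ B * U) * (star U * Φ A * U)
    rw [hjtp A B hA hB]
    simp only [Matrix.mul_assoc, hc2]
  have hΨ1 : Ψ 1 = 1 := by
    show star U * Φ 1 * U = 1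
    rw [h1, Matrix.mul_one, hU1]
  have hΨD : Ψ ((l:ℂ) • 1) = Matrix.diagonal ![(α:ℂ), (β:ℂ)] := by
    have e : star U * (Φ ((l:ℂ) • 1)) * U = Matrix.diagonal (RCLike.ofReal ∘ hM.eigenvalues) := by
      conv_lhs => rw [hM.spectral_theorem, Unitary.conjStarAlgAut_apply]
      rw [← hUdef]
      simp only [Matrix.mul_assoc, hc1]
      rw [hU1, Matrix.mul_one]
    have hfe : (RCLike.ofReal ∘ hM.eigenvalues : Fin 2 → ℂ) = ![(α:ℂ), (β:ℂ)] := by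
      funext i
      fin_cases i
      · show ((hM.eigenvalues 0 : ℝ):ℂ) = ![(α:ℂ), (β:ℂ)] 0
        rw [Matrix.cons_val_zero, hadef]
      · show ((hM.eigenvalues 1 : ℝ):ℂ) = ![(α:ℂ), (β:ℂ)] 1
        rw [Matrix.cons_val_one, Matrix.cons_val_zero, hbdef]
    have e2 : Matrix.diagonal (RCLike.ofReal ∘ hM.eigenvalues)
        = Matrix.diagonal ![(α:ℂ), (β:ℂ)] := by
      rw [hfe]
    show star U * Φ ((l:ℂ) • 1) * U = _
    rw [e, e2]
  have hdiag : ∀ A : M2, A.IsHermitian → Ψ A 0 1 = 0 :=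
    key_diag Ψ hΨherm hΨjtp hΨ1 l α β hab hΨD
  have hdiag' : ∀ A : M2, A.IsHermitian → Ψ A 1 0 = 0 := by
    intro A hA
    have := (hΨherm A hA).apply 1 0
    rw [hdiag A hA] at this
    rw [← this]
    simp
  have hre : ∀ (A : M2), A.IsHermitian → ∀ i, ((Ψ A i i).re : ℂ) = Ψ A i i := by
    intro A hA i
    exact Complex.conj_eq_iff_re.mp ((hΨherm A hA).apply i i)
  have hent0 : ∀ (A B : M2), A.IsHermitian → B.IsHermitian →
      Ψ (A * B * A) 0 0 = Ψ A 0 0 * Ψ B 0 0 * Ψ A 0 0 := by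
    intro A B hA hB
    rw [hΨjtp A B hA hB]
    simp only [Matrix.mul_apply, Fin.sum_univ_two, hdiag A hA, hdiag B hB,
      hdiag' A hA, hdiag' B hB, mul_zero, zero_mul, add_zero, zero_add]
  have hent1 : ∀ (A B : M2), A.IsHermitian → B.IsHermitian →
      Ψ (A * B * A) 1 1 = Ψ A 1 1 * Ψ B 1 1 * Ψ A 1 1 := by
    intro A B hA hB
    rw [hΨjtp A B hA hB]
    simp only [Matrix.mul_apply, Fin.sum_univ_two, hdiag A hA, hdiag B hB,
      hdiag' A hA, hdiag' B hB, mul_zero, zero_mul, add_zero, zero_add]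
  refine ⟨U, hUmem, fun A => (Ψ A 0 0).re, fun A => (Ψ A 1 1).re, ?_, ?_, ?_⟩
  · intro A B hA hB
    show (Ψ (A*B*A) 0 0).re = (Ψ A 0 0).re * (Ψ B 0 0).re * (Ψ A 0 0).re
    rw [hent0 A B hA hB]
    conv_lhs => rw [← hre A hA 0, ← hre B hB 0, ← Complex.ofReal_mul,
      ← Complex.ofReal_mul, Complex.ofReal_re]
  · intro A B hA hB
    show (Ψ (A*B*A) 1 1).re = (Ψ A 1 1).re * (Ψ B 1 1).re * (Ψ A 1 1).re
    rw [hent1 A B hA hB]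
    conv_lhs => rw [← hre A hA 1, ← hre B hB 1, ← Complex.ofReal_mul,
      ← Complex.ofReal_mul, Complex.ofReal_re]
  · intro A hA
    have hdm : Matrix.diagonal ![((Ψ A 0 0).re : ℂ), ((Ψ A 1 1).re : ℂ)] = Ψ A := by
      funext i j
      fin_cases i <;> fin_cases j
      · show Matrix.diagonal _ 0 0 = Ψ A 0 0
        rw [Matrix.diagonal_apply_eq]
        exact hre A hA 0
      · show Matrix.diagonal _ 0 1 = Ψ A 0 1
        rw [Matrix.diagonal_apply_ne _ (by decide), hdiag A hA]
      · show Matrix.diagonal _ 1 0 = Ψ A 1 0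
        rw [Matrix.diagonal_apply_ne _ (by decide), hdiag' A hA]
      · show Matrix.diagonal _ 1 1 = Ψ A 1 1
        rw [Matrix.diagonal_apply_eq]
        exact hre A hA 1
    show Φ A = U * Matrix.diagonal ![((Ψ A 0 0).re : ℂ), ((Ψ A 1 1).re : ℂ)] * star U
    rw [hdm]
    show Φ A = U * (star U * Φ A * U) * star U
    simp only [Matrix.mul_assoc, hc2]
    rw [hU2, Matrix.mul_one]
end

section
/- Let Φ : H₂(ℂ) → H₂(ℂ) be a nondegenerate J.T.P. homomorphism (Φ(0)=0, Φ(I)=I, and Φ does not vanish on all rank-one matrices). Then there exists a multiplicative map Ψ : ℝ → ℝ with Ψ(1) = 1 such that Φ(λI) = Ψ(λ)I for every λ ∈ ℝ. -/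
open Matrix

section JTPaux

lemma outer_mul_outer_s10 (a b c d : Fin 2 → ℂ) :
    vecMulVec a b * vecMulVec c d = (b ⬝ᵥ c) • vecMulVec a d := by
  ext i j
  simp [mul_apply, vecMulVec_apply, dotProduct, Fin.sum_univ_two]
  ring

lemma mul_outer (M : Matrix (Fin 2) (Fin 2) ℂ) (a b : Fin 2 → ℂ) :
    M * vecMulVec a b = vecMulVec (M.mulVec a) b := by
  ext i j
  simp [mul_apply, vecMulVec_apply, mulVec, dotProduct, Fin.sum_univ_two]
  fin_cases i <;> simp <;> ring

lemma outer_mul (M : Matrix (Fin 2) (Fin 2) ℂ) (a b : Fin 2 → ℂ) :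
    vecMulVec a b * M = vecMulVec a (M.vecMul b) := by
  ext i j
  simp [mul_apply, vecMulVec_apply, vecMul, dotProduct, Fin.sum_univ_two]
  ring

lemma outer_mulVec (a b c : Fin 2 → ℂ) :
    (vecMulVec a b).mulVec c = (b ⬝ᵥ c) • a := by
  ext i
  simp [vecMulVec_apply, mulVec, dotProduct, Fin.sum_univ_two]
  ring

lemma smul_outer (x : ℂ) (a b : Fin 2 → ℂ) :
    vecMulVec (x • a) b = x • vecMulVec a b := by
  ext i j
  simp [vecMulVec_apply]
  ring

lemma outer_smul (x : ℂ) (a b : Fin 2 → ℂ) :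
    vecMulVec a (x • b) = x • vecMulVec a b := by
  ext i j
  simp [vecMulVec_apply]
  ring

lemma outer_conjTranspose (a b : Fin 2 → ℂ) :
    (vecMulVec a (star b))ᴴ = vecMulVec b (star a) := by
  ext i j
  simp [vecMulVec_apply, conjTranspose_apply, Pi.star_apply, mul_comm]

lemma outer_hermitian (a : Fin 2 → ℂ) : (vecMulVec a (star a)).IsHermitian :=
  outer_conjTranspose a a

lemma ch2 (M : Matrix (Fin 2) (Fin 2) ℂ) :
    M * M = M.trace • M - M.det • 1 := by
  ext i j
  fin_cases i <;> fin_cases j <;>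
    simp [mul_apply, trace_fin_two, det_fin_two, Fin.sum_univ_two, one_apply] <;> ring


lemma herm_sq_zero {A : Matrix (Fin 2) (Fin 2) ℂ} (hA : A.IsHermitian) (h : A * A = 0) :
    A = 0 := by
  have key : ∀ i : Fin 2, A i 0 = 0 ∧ A i 1 = 0 := by
    intro i
    have hd := congrFun (congrFun h i) i
    rw [mul_apply] at hd
    have hco : ∀ k : Fin 2, A k i = star (A i k) := by
      intro k
      have h2 := congrArg star (hA.apply i k)
      rw [star_star] at h2
      exact h2
    simp only [Fin.sum_univ_two, hco, Matrix.zero_apply, RCLike.star_def] at hd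
    rw [Complex.mul_conj, Complex.mul_conj] at hd
    have hd' : Complex.normSq (A i 0) + Complex.normSq (A i 1) = 0 := by exact_mod_cast hd
    constructor
    · exact Complex.normSq_eq_zero.mp (by
        nlinarith [Complex.normSq_nonneg (A i 0), Complex.normSq_nonneg (A i 1)])
    · exact Complex.normSq_eq_zero.mp (by
        nlinarith [Complex.normSq_nonneg (A i 0), Complex.normSq_nonneg (A i 1)])
  ext i j
  fin_cases j
  · exact (key i).1
  · exact (key i).2

lemma idem_classify {Q : Matrix (Fin 2) (Fin 2) ℂ} (hidem : Q * Q = Q)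
    (h0 : Q ≠ 0) (h1 : Q ≠ 1) : Q.trace = 1 ∧ Q.det = 0 := by
  have hdet : Q.det = 0 := by
    by_contra hd
    have hu : IsUnit Q := (Matrix.isUnit_iff_isUnit_det Q).mpr (isUnit_iff_ne_zero.mpr hd)
    exact h1 (hu.mul_left_cancel (by rw [hidem, mul_one]))
  refine ⟨?_, hdet⟩
  have h := ch2 Q
  rw [hidem, hdet, zero_smul, sub_zero] at h
  have h2 : (Q.trace - 1) • Q = 0 := by
    rw [sub_smul, one_smul, ← h]; abel
  rcases smul_eq_zero.mp h2 with h' | h'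
  · have := sub_eq_zero.mp h'; linear_combination this
  · exact absurd h' h0


lemma exists_unit_vec {Q : Matrix (Fin 2) (Fin 2) ℂ} (hH : Q.IsHermitian)
    (htr : Q.trace = 1) (hdet : Q.det = 0) :
    ∃ q : Fin 2 → ℂ, Q = vecMulVec q (star q) ∧ star q ⬝ᵥ q = 1 := by
  have hap : ∀ i j, (starRingEnd ℂ) (Q j i) = Q i j := fun i j => hH.apply i j
  have hb : Q 1 0 = (starRingEnd ℂ) (Q 0 1) := (hap 1 0).symm
  have h00c : (starRingEnd ℂ) (Q 0 0) = Q 0 0 := hap 0 0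
  set a : ℝ := (Q 0 0).re with ha
  have h00 : Q 0 0 = (a : ℂ) := (Complex.conj_eq_iff_re.mp h00c).symm
  have htr2 : Q 0 0 + Q 1 1 = 1 := by rw [← trace_fin_two]; exact htr
  have h11 : Q 1 1 = 1 - (a : ℂ) := by rw [← h00]; linear_combination htr2
  have hdet2 : Q 0 0 * Q 1 1 - Q 0 1 * Q 1 0 = 0 := by rw [← det_fin_two]; exact hdet
  have hdet' : (a : ℂ) * (1 - (a : ℂ)) = Q 0 1 * (starRingEnd ℂ) (Q 0 1) := by
    linear_combination hdet2 + Q 0 1 * hb - Q 0 0 * h11 - (1-(a:ℂ)) * h00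
  have hns : (a : ℝ) * (1 - a) = Complex.normSq (Q 0 1) := by
    have h := hdet'
    rw [Complex.mul_conj] at h
    exact_mod_cast h
  by_cases hc : Q 0 0 = 0
  · have ha0 : (a : ℂ) = 0 := by rw [← h00]; exact hc
    have ha0' : a = 0 := by exact_mod_cast ha0
    have hb0 : Q 0 1 = 0 := by
      have : Complex.normSq (Q 0 1) = 0 := by rw [← hns, ha0']; ring
      exact Complex.normSq_eq_zero.mp this
    refine ⟨![0, 1], ?_, ?_⟩
    · ext i j
      fin_cases i <;> fin_cases j <;>
        simp [vecMulVec_apply, hc, hb0, hb, h11, ha0]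
    · simp [dotProduct, Fin.sum_univ_two]
  · have ha0 : a ≠ 0 := fun h => hc (by rw [h00, h]; simp)
    have hapos : 0 < a := by
      rcases lt_or_gt_of_ne ha0 with h | h
      · nlinarith [Complex.normSq_nonneg (Q 0 1)]
      · exact h
    have hane : (a : ℂ) ≠ 0 := by exact_mod_cast Complex.ofReal_ne_zero.mpr ha0
    set t : ℝ := Real.sqrt a with htdef
    have ht2 : (t : ℂ) * (t : ℂ) = (a : ℂ) := by
      have h : t * t = a := Real.mul_self_sqrt hapos.le
      exact_mod_cast h
    have htne : (t : ℂ) ≠ 0 := by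
      have h : t ≠ 0 := by positivity
      exact_mod_cast Complex.ofReal_ne_zero.mpr h
    have m00 : Q 0 0 * (a : ℂ) = Q 0 0 * (starRingEnd ℂ) (Q 0 0) := by
      rw [h00c]; linear_combination (-(Q 0 0)) * h00
    have m01 : Q 0 1 * (a : ℂ) = Q 0 0 * (starRingEnd ℂ) (Q 1 0) := by
      rw [hap 0 1]; linear_combination (-(Q 0 1)) * h00
    have m10 : Q 1 0 * (a : ℂ) = Q 1 0 * (starRingEnd ℂ) (Q 0 0) := by
      rw [h00c]; linear_combination (-(Q 1 0)) * h00
    have m11 : Q 1 1 * (a : ℂ) = Q 1 0 * (starRingEnd ℂ) (Q 1 0) := by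
      rw [hb, Complex.conj_conj]; linear_combination (a:ℂ) * h11 + hdet'
    have main : ∀ i j, Q i j * (a : ℂ) = Q i 0 * (starRingEnd ℂ) (Q j 0) := by
      intro i j
      fin_cases i <;> fin_cases j
      · exact m00
      · exact m01
      · exact m10
      · exact m11
    have hcj : ∀ j, (starRingEnd ℂ) (Q j 0 * (t:ℂ)⁻¹) = ((starRingEnd ℂ) (Q j 0)) * (t:ℂ)⁻¹ := by
      intro j; rw [_root_.map_mul, map_inv₀, Complex.conj_ofReal]
    refine ⟨fun i => Q i 0 * (t : ℂ)⁻¹, ?_, ?_⟩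
    · ext i j
      simp only [vecMulVec_apply, Pi.star_apply, RCLike.star_def, hcj]
      have hexp : Q i 0 * (↑t)⁻¹ * ((starRingEnd ℂ) (Q j 0) * (↑t)⁻¹)
          = (Q i j * (a:ℂ)) * ((a:ℂ))⁻¹ := by
        rw [main i j, ← ht2]
        field_simp
        try ring
      rw [hexp, mul_assoc, mul_inv_cancel₀ hane, mul_one]
    · simp only [dotProduct, Fin.sum_univ_two, Pi.star_apply, RCLike.star_def, hcj]
      have key : (starRingEnd ℂ) (Q 0 0) * (Q 0 0) + (starRingEnd ℂ) (Q 1 0) * (Q 1 0) = (a:ℂ) := by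
        linear_combination (-1 : ℂ) * m00 - m11 + (a:ℂ) * htr2
      field_simp
      linear_combination key - ht2


lemma orthonormal_complete {q q' : Fin 2 → ℂ} (hq : star q ⬝ᵥ q = 1)
    (hq' : star q' ⬝ᵥ q' = 1) (ho : star q ⬝ᵥ q' = 0) :
    vecMulVec q (star q) + vecMulVec q' (star q') = 1 := by
  set V : Matrix (Fin 2) (Fin 2) ℂ := Matrix.of (fun i j => if j = 0 then q i else q' i) with hV
  have h1 : Vᴴ * V = 1 := by
    ext i j
    have ho' : star q' ⬝ᵥ q = 0 := by
      have := congrArg star ho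
      rw [star_dotProduct] at this
      simpa using this
    fin_cases i <;> fin_cases j <;>
      · simp only [mul_apply, conjTranspose_apply, hV, of_apply, one_apply, Fin.sum_univ_two]
        simp only [dotProduct, Fin.sum_univ_two, Pi.star_apply] at hq hq' ho ho'
        simp_all
  have h2 : V * Vᴴ = 1 := mul_eq_one_comm.mp h1
  rw [← h2]
  ext i j
  simp [mul_apply, conjTranspose_apply, hV, vecMulVec_apply, Fin.sum_univ_two]
  try ring

-- eigenvector lemma

lemma eigen_of_rel {S : Matrix (Fin 2) (Fin 2) ℂ} (hS : S.IsHermitian)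
    {q : Fin 2 → ℂ} (hq : star q ⬝ᵥ q = 1)
    (hrel : S * vecMulVec q (star q) * S = vecMulVec q (star q) * (S * S) * vecMulVec q (star q)) :
    ∃ μ : ℂ, S.mulVec q = μ • q := by
  set u := S.mulVec q with hu
  have hstar : S.vecMul (star q) = star u := by
    rw [hu, star_mulVec, hS.eq]
  have hL : S * vecMulVec q (star q) * S = vecMulVec u (star u) := by
    rw [mul_outer, outer_mul, hstar]
  have hR : vecMulVec q (star q) * (S * S) * vecMulVec q (star q)
      = (star q ⬝ᵥ (S*S).mulVec q) • vecMulVec q (star q) := by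
    rw [outer_mul, outer_mul_outer_s10, dotProduct_mulVec]
  set c := star q ⬝ᵥ (S*S).mulVec q with hc
  have key : vecMulVec u (star u) = c • vecMulVec q (star q) := by
    rw [← hL, hrel, hR]
  by_cases hu0 : u = 0
  · exact ⟨0, by rw [zero_smul]; exact hu0⟩
  · have happ := congrArg (fun M => M.mulVec u) key
    simp only [outer_mulVec, smul_mulVec] at happ
    have hnu : star u ⬝ᵥ u ≠ 0 := by
      intro h
      apply hu0
      have hi : star u ⬝ᵥ u = (Complex.normSq (u 0) : ℂ) + Complex.normSq (u 1) := by
        simp only [dotProduct, Fin.sum_univ_two, Pi.star_apply, RCLike.star_def]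
        rw [mul_comm ((starRingEnd ℂ) (u 0)), mul_comm ((starRingEnd ℂ) (u 1)),
          Complex.mul_conj, Complex.mul_conj]
      rw [hi] at h
      have h'' : Complex.normSq (u 0) + Complex.normSq (u 1) = 0 := by exact_mod_cast h
      have e0 : u 0 = 0 := Complex.normSq_eq_zero.mp (by
        nlinarith [Complex.normSq_nonneg (u 0), Complex.normSq_nonneg (u 1)])
      have e1 : u 1 = 0 := Complex.normSq_eq_zero.mp (by
        nlinarith [Complex.normSq_nonneg (u 0), Complex.normSq_nonneg (u 1)])
      funext i
      fin_cases i
      · exact e0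
      · exact e1
    refine ⟨(star u ⬝ᵥ u)⁻¹ * (c * (star q ⬝ᵥ u)), ?_⟩
    have h2 := congrArg (fun v => (star u ⬝ᵥ u)⁻¹ • v) happ
    simp only [smul_smul] at h2
    rw [inv_mul_cancel₀ hnu, one_smul] at h2
    exact h2



lemma real_mult {ψ : ℝ → ℝ} (h1 : ψ 1 = 1)
    (hsq : ∀ x y : ℝ, ψ (x * x * y) = ψ x * ψ x * ψ y) :
    ∀ x y : ℝ, ψ (x * y) = ψ x * ψ y := by
  have hs : ∀ x : ℝ, ψ (x * x) = ψ x * ψ x := by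
    intro x
    have h := hsq x 1
    rw [mul_one, h1, mul_one] at h
    exact h
  have hpos : ∀ x y : ℝ, 0 ≤ x → ψ (x * y) = ψ x * ψ y := by
    intro x y hx
    have hsx : Real.sqrt x * Real.sqrt x = x := Real.mul_self_sqrt hx
    have h := hsq (Real.sqrt x) y
    rw [hsx] at h
    rw [h, ← hs (Real.sqrt x), hsx]
  have hm1 : ψ (-1) * ψ (-1) = 1 := by
    have h := hsq (-1) 1
    rw [mul_one, h1, mul_one] at h
    norm_num at h
    rw [h1] at h
    exact h.symm
  have hneg : ∀ y : ℝ, ψ (-y) = ψ y * ψ (-1) := by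
    intro y
    rcases le_or_gt 0 y with hy | hy
    · have := hpos y (-1) hy
      rw [mul_neg_one] at this
      exact this
    · have h2 := hpos (-y) (-1) (by linarith)
      rw [mul_neg_one, neg_neg] at h2
      rw [h2, mul_assoc, hm1, mul_one]
  intro x y
  rcases le_or_gt 0 x with hx | hx
  · exact hpos x y hx
  · have h2 : ψ (x * y) = ψ (-x) * ψ (-y) := by
      have := hpos (-x) (-y) (by linarith)
      rw [show -x * -y = x * y by ring] at this
      exact this
    have h3 : ψ (-x) = ψ x * ψ (-1) := hneg x
    have h4 : ψ (-y) = ψ y * ψ (-1) := hneg y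
    rw [h2, h3, h4]
    linear_combination (ψ x * ψ y) * hm1


end JTPaux

theorem jtp_nondegenerate_scalars_to_scalars
    (Φ : Matrix (Fin 2) (Fin 2) ℂ → Matrix (Fin 2) (Fin 2) ℂ)
    (hherm : ∀ A, A.IsHermitian → (Φ A).IsHermitian)
    (hjtp : ∀ A B, A.IsHermitian → B.IsHermitian → Φ (A * B * A) = Φ A * Φ B * Φ A)
    (h0 : Φ 0 = 0) (h1 : Φ 1 = 1)
    (hnd : ∃ A : Matrix (Fin 2) (Fin 2) ℂ, A.IsHermitian ∧ A.rank = 1 ∧ Φ A ≠ 0) :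
    ∃ Ψ : ℝ → ℝ, (∀ x y : ℝ, Ψ (x * y) = Ψ x * Ψ y) ∧ Ψ 1 = 1 ∧
      ∀ l : ℝ, Φ ((l : ℂ) • 1) = (Ψ l : ℂ) • 1 := by
  obtain ⟨A, hAH, hArank, hAne⟩ := hnd
  -- basic facts about A
  have hAdet : A.det = 0 := by
    by_contra h
    have hr := A.rank_of_isUnit ((Matrix.isUnit_iff_isUnit_det A).mpr (isUnit_iff_ne_zero.mpr h))
    rw [hArank] at hr
    simp [Fintype.card_fin] at hr
  have hA0 : A ≠ 0 := by
    intro h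
    rw [h, Matrix.rank_zero] at hArank
    exact one_ne_zero hArank.symm
  set t : ℂ := A.trace with htdef
  have htreal : (starRingEnd ℂ) t = t := by
    have h := Matrix.trace_conjTranspose A
    rw [hAH.eq] at h
    exact h.symm
  have hA2 : A * A = t • A := by
    have h := ch2 A
    rw [hAdet, zero_smul, sub_zero] at h
    exact h
  have ht0 : t ≠ 0 := by
    intro h
    apply hA0
    apply herm_sq_zero hAH
    rw [hA2, h, zero_smul]
  -- the projection P
  set P : Matrix (Fin 2) (Fin 2) ℂ := t⁻¹ • A with hPdef
  have hPH : P.IsHermitian := by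
    show Pᴴ = P
    rw [hPdef, conjTranspose_smul, hAH.eq, star_inv₀]
    congr 1
    exact congrArg Inv.inv htreal
  have hPP : P * P = P := by
    calc P * P = (t⁻¹ * t⁻¹) • (A * A) := by
          simp only [hPdef, Matrix.smul_mul, Matrix.mul_smul, smul_smul]
      _ = ((t⁻¹ * t⁻¹) * t) • A := by rw [hA2, smul_smul]
      _ = t⁻¹ • A := by congr 1; field_simp
      _ = P := hPdef.symm
  have hPAP : P * A * P = A := by
    have hA3 : A * A * A = (t * t) • A := by
      rw [hA2, Matrix.smul_mul, hA2, smul_smul]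
    have hs : (t⁻¹ * t⁻¹) * (t * t) = 1 := by field_simp
    calc P * A * P = (t⁻¹ * t⁻¹) • (A * A * A) := by
          simp only [hPdef, Matrix.smul_mul, Matrix.mul_smul, smul_smul]
      _ = ((t⁻¹ * t⁻¹) * (t * t)) • A := by rw [hA3, smul_smul]
      _ = A := by rw [hs, one_smul]
  have hQH := hherm P hPH
  have hQ0 : Φ P ≠ 0 := by
    intro h
    apply hAne
    have hj := hjtp P A hPH hAH
    rw [hPAP, h, zero_mul, zero_mul] at hj
    exact hj
  have hQidem : Φ P * Φ P = Φ P := by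
    have hj := hjtp P 1 hPH isHermitian_one
    rw [mul_one, hPP, h1, mul_one] at hj
    exact hj.symm
  -- extract unit vector p with P = p pᴴ
  have hP0 : P ≠ 0 := fun h => hQ0 (by rw [h, h0])
  have hP1 : P ≠ 1 := by
    intro h
    apply ht0
    have hAt : A = t • (1 : Matrix (Fin 2) (Fin 2) ℂ) := by
      rw [← h, hPdef, smul_smul]
      field_simp
      rw [one_smul]
    have hd := hAdet
    rw [hAt, det_smul, det_one, mul_one, Fintype.card_fin] at hd
    exact pow_eq_zero_iff (by norm_num) |>.mp hd
  obtain ⟨htrP, hdtP⟩ := idem_classify hPP hP0 hP1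
  obtain ⟨p, hPx, hpu⟩ := exists_unit_vec hPH htrP hdtP

  have hpe : (starRingEnd ℂ) (p 0) * p 0 + (starRingEnd ℂ) (p 1) * p 1 = 1 := by
    have h := hpu
    simp only [dotProduct, Fin.sum_univ_two, Pi.star_apply, RCLike.star_def] at h
    exact h
  set p' : Fin 2 → ℂ := ![-(starRingEnd ℂ) (p 1), (starRingEnd ℂ) (p 0)] with hp'def
  have hpp' : star p ⬝ᵥ p' = 0 := by
    simp only [dotProduct, Fin.sum_univ_two, Pi.star_apply, RCLike.star_def, hp'def]
    simp
    try ring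
  have hp'p : star p' ⬝ᵥ p = 0 := by
    simp only [dotProduct, Fin.sum_univ_two, Pi.star_apply, RCLike.star_def, hp'def]
    simp
    try ring
  have hp'u : star p' ⬝ᵥ p' = 1 := by
    simp only [dotProduct, Fin.sum_univ_two, Pi.star_apply, RCLike.star_def, hp'def]
    simp
    linear_combination hpe
  set γ : ℂ := ((Real.sqrt 2 : ℝ) : ℂ)⁻¹ with hγdef
  have hγc : (starRingEnd ℂ) γ = γ := by
    rw [hγdef, map_inv₀, Complex.conj_ofReal]
  have hγs : star γ = γ := hγc
  have hγ2 : γ * γ = 2⁻¹ := by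
    rw [hγdef, ← mul_inv]
    have h2 : (Real.sqrt 2 : ℝ) * Real.sqrt 2 = 2 := Real.mul_self_sqrt (by norm_num)
    have : ((Real.sqrt 2 : ℝ) : ℂ) * ((Real.sqrt 2 : ℝ) : ℂ) = 2 := by exact_mod_cast h2
    rw [this]
  set r : Fin 2 → ℂ := γ • (p + p') with hrdef
  set r' : Fin 2 → ℂ := γ • (p - p') with hr'def
  have hstar_r : star r = γ • (star p + star p') := by
    rw [hrdef, star_smul, star_add, hγs]
  have hstar_r' : star r' = γ • (star p - star p') := by
    rw [hr'def, star_smul, star_sub, hγs]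
  have hpr : star p ⬝ᵥ r = γ := by
    rw [hrdef, dotProduct_smul, dotProduct_add, hpu, hpp', smul_eq_mul]
    ring
  have hrp : star r ⬝ᵥ p = γ := by
    rw [hstar_r, smul_dotProduct, add_dotProduct, hpu, hp'p, smul_eq_mul]
    ring
  have hp'r : star p' ⬝ᵥ r = γ := by
    rw [hrdef, dotProduct_smul, dotProduct_add, hp'p, hp'u, smul_eq_mul]
    ring
  have hrp' : star r ⬝ᵥ p' = γ := by
    rw [hstar_r, smul_dotProduct, add_dotProduct, hpp', hp'u, smul_eq_mul]
    ring
  have hrr : star r ⬝ᵥ r = 1 := by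
    rw [hstar_r, smul_dotProduct, hrdef, dotProduct_smul, add_dotProduct, dotProduct_add,
      dotProduct_add, hpu, hpp', hp'p, hp'u, smul_eq_mul, smul_eq_mul]
    linear_combination 2 * hγ2
  have hpr' : star p ⬝ᵥ r' = γ := by
    rw [hr'def, dotProduct_smul, dotProduct_sub, hpu, hpp', smul_eq_mul]
    ring
  have hr'p : star r' ⬝ᵥ p = γ := by
    rw [hstar_r', smul_dotProduct, sub_dotProduct, hpu, hp'p, smul_eq_mul]
    ring
  have hrr' : star r ⬝ᵥ r' = 0 := by
    rw [hstar_r, smul_dotProduct, hr'def, dotProduct_smul, add_dotProduct, dotProduct_sub,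
      dotProduct_sub, hpu, hpp', hp'p, hp'u, smul_eq_mul, smul_eq_mul]
    ring
  have hr'r : star r' ⬝ᵥ r = 0 := by
    rw [hstar_r', smul_dotProduct, hrdef, dotProduct_smul, sub_dotProduct, dotProduct_add,
      dotProduct_add, hpu, hpp', hp'p, hp'u, smul_eq_mul, smul_eq_mul]
    ring

  -- matrices built from the vectors
  set P' : Matrix (Fin 2) (Fin 2) ℂ := vecMulVec p' (star p') with hP'm
  set R : Matrix (Fin 2) (Fin 2) ℂ := vecMulVec r (star r) with hRm
  set R' : Matrix (Fin 2) (Fin 2) ℂ := vecMulVec r' (star r') with hR'm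
  set B₁ : Matrix (Fin 2) (Fin 2) ℂ := vecMulVec p (star p') + vecMulVec p' (star p) with hB₁m
  set B₂ : Matrix (Fin 2) (Fin 2) ℂ :=
    vecMulVec p (star r) + vecMulVec r (star p) - γ • vecMulVec r (star r) with hB₂m
  set B' : Matrix (Fin 2) (Fin 2) ℂ :=
    vecMulVec p (star p) - vecMulVec p' (star p') with hB'm
  have hP'H : P'.IsHermitian := outer_hermitian p'
  have hRH : R.IsHermitian := outer_hermitian r
  have hR'H : R'.IsHermitian := outer_hermitian r'
  have hB₁H : B₁.IsHermitian := by
    show B₁ᴴ = B₁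
    rw [hB₁m, conjTranspose_add, outer_conjTranspose, outer_conjTranspose, add_comm]
  have hB₂H : B₂.IsHermitian := by
    show B₂ᴴ = B₂
    rw [hB₂m, conjTranspose_sub, conjTranspose_add, outer_conjTranspose, outer_conjTranspose,
      conjTranspose_smul, outer_conjTranspose, hγs, add_comm]
  have hB'H : B'.IsHermitian := by
    show B'ᴴ = B'
    rw [hB'm, conjTranspose_sub, outer_conjTranspose, outer_conjTranspose]
  -- product identities
  have hPP'P : P * P' * P = 0 := by
    rw [hPx, hP'm]
    simp only [outer_mul_outer_s10, Matrix.smul_mul, smul_smul, hpp', hp'p, zero_smul, smul_zero,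
      zero_mul, Matrix.zero_mul]
  have hB₁P'B₁ : B₁ * P' * B₁ = P := by
    rw [hPx, hP'm, hB₁m]
    simp only [Matrix.add_mul, Matrix.mul_add, outer_mul_outer_s10, Matrix.smul_mul, Matrix.mul_smul,
      smul_smul, hpp', hp'p, hp'u, hpu, one_smul, zero_smul, smul_zero, add_zero, zero_add]
  have hPB₁P : P * B₁ * P = 0 := by
    rw [hPx, hB₁m]
    simp only [Matrix.add_mul, Matrix.mul_add, outer_mul_outer_s10, Matrix.smul_mul, Matrix.mul_smul,
      smul_smul, hpp', hp'p, hp'u, hpu, one_smul, zero_smul, smul_zero, add_zero, zero_add]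
  have hRB₁R : R * B₁ * R = R := by
    rw [hRm, hB₁m]
    simp only [Matrix.add_mul, Matrix.mul_add, outer_mul_outer_s10, Matrix.smul_mul, Matrix.mul_smul,
      smul_smul, hpr, hrp, hp'r, hrp', hrr, one_smul, zero_smul, smul_zero, add_zero, zero_add]
    rw [← add_smul]
    have : γ * γ + γ * γ = 1 := by linear_combination 2 * hγ2
    rw [this, one_smul]
  have hB₂RB₂ : B₂ * R * B₂ = P := by
    rw [hPx, hRm, hB₂m]
    simp only [Matrix.sub_mul, Matrix.mul_sub, Matrix.add_mul, Matrix.mul_add, outer_mul_outer_s10,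
      Matrix.smul_mul, Matrix.mul_smul, smul_smul, hpr, hrp, hp'r, hrp', hrr, hpu, hpp', hp'p,
      one_smul, zero_smul, smul_zero, add_zero, zero_add]
    simp only [smul_add, smul_sub, smul_smul]; abel
  have hRB'R : R * B' * R = 0 := by
    rw [hRm, hB'm]
    simp only [Matrix.sub_mul, Matrix.mul_sub, outer_mul_outer_s10, Matrix.smul_mul, Matrix.mul_smul,
      smul_smul, hpr, hrp, hp'r, hrp', one_smul, zero_smul, smul_zero, add_zero, zero_add]
    abel
  have hPB'P : P * B' * P = P := by
    rw [hPx, hB'm]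
    simp only [Matrix.sub_mul, Matrix.mul_sub, outer_mul_outer_s10, Matrix.smul_mul, Matrix.mul_smul,
      smul_smul, hpu, hpp', hp'p, one_smul, zero_smul, smul_zero, add_zero, zero_add, sub_zero]
  have hPRP : P * R * P = (2⁻¹ : ℂ) • P := by
    rw [hPx, hRm]
    simp only [outer_mul_outer_s10, Matrix.smul_mul, smul_smul, hpr, hrp]
    rw [hγ2]
  have hPR'P : P * R' * P = (2⁻¹ : ℂ) • P := by
    rw [hPx, hR'm]
    simp only [outer_mul_outer_s10, Matrix.smul_mul, smul_smul, hpr', hr'p]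
    rw [hγ2]
  have hRR'R : R * R' * R = 0 := by
    rw [hRm, hR'm]
    simp only [outer_mul_outer_s10, Matrix.smul_mul, smul_smul, hrr', hr'r, zero_smul, smul_zero,
      Matrix.zero_mul, zero_mul]
  have hP'P' : P' * P' = P' := by
    rw [hP'm, outer_mul_outer_s10, hp'u, one_smul]
  have hRR : R * R = R := by
    rw [hRm, outer_mul_outer_s10, hrr, one_smul]

  -- Φ of the various projections
  have hQ'H := hherm P' hP'H
  have hEH := hherm R hRH
  have hQ'idem : Φ P' * Φ P' = Φ P' := by
    have hj := hjtp P' 1 hP'H isHermitian_one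
    rw [mul_one, hP'P', h1, mul_one] at hj
    exact hj.symm
  have hEidem : Φ R * Φ R = Φ R := by
    have hj := hjtp R 1 hRH isHermitian_one
    rw [mul_one, hRR, h1, mul_one] at hj
    exact hj.symm
  have hE0 : Φ R ≠ 0 := by
    intro h
    apply hQ0
    have hj := hjtp B₂ R hB₂H hRH
    rw [hB₂RB₂, h, mul_zero, Matrix.zero_mul] at hj
    exact hj
  have hQ1 : Φ P ≠ 1 := by
    intro h
    have hj := hjtp P B₁ hPH hB₁H
    rw [hPB₁P, h0, h, one_mul, mul_one] at hj
    have hj2 := hjtp R B₁ hRH hB₁H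
    rw [hRB₁R, ← hj, mul_zero, Matrix.zero_mul] at hj2
    exact hE0 hj2
  have hQ'0 : Φ P' ≠ 0 := by
    intro h
    apply hQ0
    have hj := hjtp B₁ P' hB₁H hP'H
    rw [hB₁P'B₁, h, mul_zero, Matrix.zero_mul] at hj
    exact hj
  have hQQ'Q : Φ P * Φ P' * Φ P = 0 := by
    have hj := hjtp P P' hPH hP'H
    rw [hPP'P, h0] at hj
    exact hj.symm
  have hQ'1 : Φ P' ≠ 1 := by
    intro h
    have h2 := hQQ'Q
    rw [h, mul_one, hQidem] at h2
    exact hQ0 h2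
  obtain ⟨htrQ, hdtQ⟩ := idem_classify hQidem hQ0 hQ1
  obtain ⟨q, hQx, hqu⟩ := exists_unit_vec hQH htrQ hdtQ
  obtain ⟨htrQ', hdtQ'⟩ := idem_classify hQ'idem hQ'0 hQ'1
  obtain ⟨q', hQ'x, hq'u⟩ := exists_unit_vec hQ'H htrQ' hdtQ'
  have horth : star q ⬝ᵥ q' = 0 := by
    have h2 := hQQ'Q
    rw [hQx, hQ'x, outer_mul_outer_s10, Matrix.smul_mul, outer_mul_outer_s10, smul_smul] at h2
    have hQne : vecMulVec q (star q) ≠ 0 := by rw [← hQx]; exact hQ0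
    have hsc := (smul_eq_zero.mp h2).resolve_right hQne
    have hcc : star (star q ⬝ᵥ q') = star q' ⬝ᵥ q := by
      rw [star_dotProduct, star_star]
    rcases mul_eq_zero.mp hsc with h' | h'
    · exact h'
    · rw [← hcc] at h'
      exact star_eq_zero.mp h'
  have hcomp := orthonormal_complete hqu hq'u horth
  have hE1 : Φ R ≠ 1 := by
    intro h
    have hj := hjtp R B' hRH hB'H
    rw [hRB'R, h0, h, one_mul, mul_one] at hj
    have hj2 := hjtp P B' hPH hB'H
    rw [hPB'P, ← hj, mul_zero, Matrix.zero_mul] at hj2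
    exact hQ0 hj2
  obtain ⟨htrE, hdtE⟩ := idem_classify hEidem hE0 hE1
  obtain ⟨e, hEx, heu⟩ := exists_unit_vec hEH htrE hdtE
  have hEQ : Φ R ≠ Φ P := by
    intro h
    have hj := hjtp P R hPH hRH
    rw [hPRP, h, hQidem, hQidem] at hj
    have hj2 := hjtp P R' hPH hR'H
    rw [hPR'P] at hj2
    have hj3 := hjtp R R' hRH hR'H
    rw [hRR'R, h0, h] at hj3
    exact hQ0 (by rw [← hj, hj2, ← hj3])
  have hhalfH : ((2⁻¹ : ℂ) • P).IsHermitian := by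
    show _ᴴ = _
    rw [conjTranspose_smul, hPH.eq]
    congr 1
    rw [star_inv₀]
    norm_num
  have h4H : ((4 : ℂ) • P).IsHermitian := by
    show _ᴴ = _
    rw [conjTranspose_smul, hPH.eq]
    congr 1
    norm_num
  have hEQ' : Φ R ≠ Φ P' := by
    intro h
    have hj := hjtp P R hPH hRH
    rw [hPRP, h, hQQ'Q] at hj
    have harg : ((2⁻¹ : ℂ) • P) * ((4 : ℂ) • P) * ((2⁻¹ : ℂ) • P) = P := by
      calc ((2⁻¹ : ℂ) • P) * ((4 : ℂ) • P) * ((2⁻¹ : ℂ) • P)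
          = ((2⁻¹ : ℂ) * 4 * 2⁻¹) • (P * P * P) := by
            simp only [Matrix.smul_mul, Matrix.mul_smul, smul_smul]
            ring_nf
        _ = P := by rw [hPP, hPP]; norm_num
    have hj2 := hjtp ((2⁻¹ : ℂ) • P) ((4 : ℂ) • P) hhalfH h4H
    rw [harg, hj, Matrix.zero_mul, Matrix.zero_mul] at hj2
    exact hQ0 hj2

  -- scalar matrices are Hermitian
  have hscalH : ∀ x : ℝ, ((x : ℂ) • (1 : Matrix (Fin 2) (Fin 2) ℂ)).IsHermitian := by
    intro x
    show _ᴴ = _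
    rw [conjTranspose_smul, conjTranspose_one]
    congr 1
    exact Complex.conj_ofReal x
  -- Φ maps scalar matrices to scalar matrices
  have hscalar : ∀ l : ℝ, ∃ c : ℝ, Φ ((l : ℂ) • 1) = (c : ℂ) • 1 := by
    intro l
    have hSH := hherm _ (hscalH l)
    have e3 : Φ (((l * l : ℝ) : ℂ) • 1) = Φ ((l : ℂ) • 1) * Φ ((l : ℂ) • 1) := by
      have hj := hjtp ((l : ℂ) • 1) 1 (hscalH l) isHermitian_one
      rw [mul_one, h1, mul_one] at hj
      have harg : ((l : ℂ) • (1 : Matrix (Fin 2) (Fin 2) ℂ)) * ((l : ℂ) • 1)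
          = ((l * l : ℝ) : ℂ) • 1 := by
        rw [Matrix.smul_mul, Matrix.mul_smul, smul_smul, mul_one]
        congr 1
        push_cast
        ring
      rw [← harg]
      exact hj
    have rel : ∀ W : Matrix (Fin 2) (Fin 2) ℂ, W.IsHermitian → W * W = W →
        Φ ((l : ℂ) • 1) * Φ W * Φ ((l : ℂ) • 1)
          = Φ W * (Φ ((l : ℂ) • 1) * Φ ((l : ℂ) • 1)) * Φ W := by
      intro W hWH hWW
      have j1 := hjtp ((l : ℂ) • 1) W (hscalH l) hWH
      have j2 := hjtp W (((l * l : ℝ) : ℂ) • 1) hWH (hscalH _)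
      have a1 : ((l : ℂ) • 1) * W * ((l : ℂ) • 1) = ((l * l : ℝ) : ℂ) • W := by
        rw [Matrix.smul_mul, one_mul, Matrix.smul_mul, Matrix.mul_smul, mul_one, smul_smul]
        congr 1
        push_cast
        ring
      have a2 : W * (((l * l : ℝ) : ℂ) • 1) * W = ((l * l : ℝ) : ℂ) • W := by
        rw [Matrix.mul_smul, mul_one, Matrix.smul_mul, hWW]
      rw [a1] at j1
      rw [a2, e3] at j2
      rw [← j1, j2]
    have relQ := rel P hPH hPP
    rw [hQx] at relQ
    obtain ⟨μ, hμ⟩ := eigen_of_rel hSH hqu relQ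
    have relQ' := rel P' hP'H hP'P'
    rw [hQ'x] at relQ'
    obtain ⟨μ', hμ'⟩ := eigen_of_rel hSH hq'u relQ'
    have relE := rel R hRH hRR
    rw [hEx] at relE
    obtain ⟨κ, hκ⟩ := eigen_of_rel hSH heu relE
    set S := Φ ((l : ℂ) • 1) with hSdef
    set α := star q ⬝ᵥ e with hαdef
    set β := star q' ⬝ᵥ e with hβdef
    have he : e = α • q + β • q' := by
      have h2 : (1 : Matrix (Fin 2) (Fin 2) ℂ).mulVec e = e := one_mulVec e
      rw [← hcomp, add_mulVec, outer_mulVec, outer_mulVec] at h2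
      exact h2.symm
    have houter : ∀ (z : Fin 2 → ℂ) (c : ℂ), e = c • z → (starRingEnd ℂ) c * c = 1 →
        vecMulVec e (star e) = vecMulVec z (star z) := by
      intro z c hz hc
      rw [hz, star_smul, smul_outer, outer_smul, smul_smul]
      have hcs : (c * star c) = 1 := by
        rw [mul_comm]
        exact_mod_cast hc
      rw [hcs, one_smul]
    have hαne : α ≠ 0 := by
      intro hz
      apply hEQ'
      rw [hEx, hQ'x]
      have he' : e = β • q' := by rw [he, hz, zero_smul, zero_add]
      have hβu : (starRingEnd ℂ) β * β = 1 := by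
        have h3 := heu
        rw [he', star_smul, smul_dotProduct, dotProduct_smul, hq'u] at h3
        simpa [smul_eq_mul] using h3
      exact houter q' β he' hβu
    have hβne : β ≠ 0 := by
      intro hz
      apply hEQ
      rw [hEx, hQx]
      have he' : e = α • q := by rw [he, hz, zero_smul, add_zero]
      have hαu : (starRingEnd ℂ) α * α = 1 := by
        have h3 := heu
        rw [he', star_smul, smul_dotProduct, dotProduct_smul, hqu] at h3
        simpa [smul_eq_mul] using h3
      exact houter q α he' hαu
    have hqq' : star q' ⬝ᵥ q = 0 := by
      have h3 := congrArg star horth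
      rw [star_dotProduct, star_star] at h3
      simpa using h3
    have hw1 : S.mulVec e = (κ * α) • q + (κ * β) • q' := by
      rw [hκ, he, smul_add, smul_smul, smul_smul]
    have hw2 : S.mulVec e = (α * μ) • q + (β * μ') • q' := by
      conv_lhs => rw [he]
      rw [mulVec_add, mulVec_smul, mulVec_smul, hμ, hμ', smul_smul, smul_smul]
    have heq := hw1.symm.trans hw2
    have hc1 : κ * α = α * μ := by
      have h5 := congrArg (fun v => star q ⬝ᵥ v) heq
      simp only [dotProduct_add, dotProduct_smul, hqu, horth, smul_eq_mul, mul_one, mul_zero,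
        add_zero] at h5
      exact h5
    have hc2 : κ * β = β * μ' := by
      have h5 := congrArg (fun v => star q' ⬝ᵥ v) heq
      simp only [dotProduct_add, dotProduct_smul, hq'u, hqq', smul_eq_mul, mul_one, mul_zero,
        add_zero, zero_add] at h5
      exact h5
    have hμκ : μ = κ := by
      apply mul_left_cancel₀ hαne
      rw [← hc1, mul_comm]
    have hμ'κ : μ' = κ := by
      apply mul_left_cancel₀ hβne
      rw [← hc2, mul_comm]
    have hμ2 : S.mulVec q = κ • q := by rw [hμ, hμκ]
    have hμ'2 : S.mulVec q' = κ • q' := by rw [hμ', hμ'κ]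
    have hS1 : S = κ • 1 := by
      calc S = S * 1 := (mul_one S).symm
        _ = S * (vecMulVec q (star q) + vecMulVec q' (star q')) := by rw [hcomp]
        _ = vecMulVec (S.mulVec q) (star q) + vecMulVec (S.mulVec q') (star q') := by
              rw [Matrix.mul_add, mul_outer, mul_outer]
        _ = κ • (vecMulVec q (star q) + vecMulVec q' (star q')) := by
              rw [hμ2, hμ'2, smul_outer, smul_outer, smul_add]
        _ = κ • 1 := by rw [hcomp]
    have hκreal : (starRingEnd ℂ) κ = κ := by
      have h3 := hSH.eq
      rw [hS1, conjTranspose_smul, conjTranspose_one] at h3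
      have h4 := congrFun (congrFun h3 0) 0
      simpa [one_apply] using h4
    refine ⟨κ.re, ?_⟩
    rw [hS1, Complex.conj_eq_iff_re.mp hκreal]
  choose Ψ hΨ using hscalar
  have scalar_eq : ∀ x y : ℝ, (x : ℂ) • (1 : Matrix (Fin 2) (Fin 2) ℂ) = (y : ℂ) • 1 → x = y := by
    intro x y h
    have h2 := congrFun (congrFun h 0) 0
    simp [one_apply] at h2
    exact_mod_cast h2
  have hΨ1 : Ψ 1 = 1 := by
    have h2 := hΨ 1
    have h4 : ((1 : ℝ) : ℂ) • (1 : Matrix (Fin 2) (Fin 2) ℂ) = 1 := by norm_num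
    rw [h4, h1] at h2
    exact (scalar_eq 1 (Ψ 1) (by rw [← h2, h4])).symm
  have hsq : ∀ x y : ℝ, Ψ (x * x * y) = Ψ x * Ψ x * Ψ y := by
    intro x y
    have hj := hjtp ((x : ℂ) • 1) ((y : ℂ) • 1) (hscalH x) (hscalH y)
    have harg : ((x : ℂ) • (1 : Matrix (Fin 2) (Fin 2) ℂ)) * ((y : ℂ) • 1) * ((x : ℂ) • 1)
        = ((x * x * y : ℝ) : ℂ) • 1 := by
      simp only [Matrix.smul_mul, Matrix.mul_smul, smul_smul, mul_one, one_mul]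
      congr 1
      push_cast
      ring
    rw [harg, hΨ, hΨ, hΨ] at hj
    have hrhs : ((Ψ x : ℂ) • (1 : Matrix (Fin 2) (Fin 2) ℂ)) * ((Ψ y : ℂ) • 1) * ((Ψ x : ℂ) • 1)
        = ((Ψ x * Ψ x * Ψ y : ℝ) : ℂ) • 1 := by
      simp only [Matrix.smul_mul, Matrix.mul_smul, smul_smul, mul_one, one_mul]
      congr 1
      push_cast
      ring
    rw [hrhs] at hj
    exact scalar_eq _ _ hj
  exact ⟨Ψ, real_mult hΨ1 hsq, hΨ1, hΨ⟩
end

section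
/- Let Φ : H₂(ℂ) → H₂(ℂ) be a nondegenerate J.T.P. homomorphism with Φ(E₁₁) = E₁₁, where E₁₁ = diag(1,0). Then for all a, c ∈ ℝ and b ∈ ℂ, the (1,1) entry of Φ([[a, b],[conj(b), c]]) equals Ψ(a) and the (2,2) entry equals Ψ(c), where Ψ : ℝ → ℝ is the multiplicative map with Φ(λI) = Ψ(λ)I. -/
open Matrix

private lemma idem_classify_s11 (P : Matrix (Fin 2) (Fin 2) ℂ)
    (hP : P.IsHermitian) (hidem : P * P = P) (h00 : P 0 0 = 0) (hne : P ≠ 0) :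
    P = !![(0 : ℂ), 0; 0, 1] := by
  have h10 : P 1 0 = star (P 0 1) := by
    have := hP.apply 1 0; rw [← this]
  have e00 : (P * P) 0 0 = P 0 0 := by rw [hidem]
  rw [Matrix.mul_apply, Fin.sum_univ_two, h00, h10] at e00
  simp only [zero_mul, zero_add] at e00
  have h01 : P 0 1 = 0 := by
    have h := e00
    rw [Complex.star_def, Complex.mul_conj] at h
    exact Complex.normSq_eq_zero.mp (by exact_mod_cast h)
  have h10' : P 1 0 = 0 := by rw [h10, h01, star_zero]
  have e11 : (P * P) 1 1 = P 1 1 := by rw [hidem]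
  rw [Matrix.mul_apply, Fin.sum_univ_two, h10', h01] at e11
  simp only [zero_mul, mul_zero, zero_add] at e11
  have hcases : P 1 1 = 0 ∨ P 1 1 = 1 := by
    have hfac : P 1 1 * (P 1 1 - 1) = 0 := by linear_combination e11
    rcases mul_eq_zero.mp hfac with h | h
    · exact Or.inl h
    · exact Or.inr (by linear_combination h)
  rcases hcases with h11 | h11
  · exfalso; apply hne
    ext i j
    fin_cases i <;> fin_cases j <;> simp [h00, h01, h10', h11]
  · ext i j
    fin_cases i <;> fin_cases j <;> simp [h00, h01, h10', h11]

theorem jtp_diagonal_entries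
    (Φ : Matrix (Fin 2) (Fin 2) ℂ → Matrix (Fin 2) (Fin 2) ℂ)
    (hherm : ∀ A, A.IsHermitian → (Φ A).IsHermitian)
    (hjtp : ∀ A B, A.IsHermitian → B.IsHermitian → Φ (A * B * A) = Φ A * Φ B * Φ A)
    (h0 : Φ 0 = 0) (h1 : Φ 1 = 1)
    (hnd : ∃ A : Matrix (Fin 2) (Fin 2) ℂ, A.IsHermitian ∧ A.rank = 1 ∧ Φ A ≠ 0)
    (hE : Φ (Matrix.diagonal ![(1 : ℂ), 0]) = Matrix.diagonal ![(1 : ℂ), 0])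
    (Ψ : ℝ → ℝ) (hΨmul : ∀ x y : ℝ, Ψ (x * y) = Ψ x * Ψ y)
    (hΨ : ∀ l : ℝ, Φ ((l : ℂ) • 1) = (Ψ l : ℂ) • 1) :
    ∀ (a c : ℝ) (b : ℂ),
      (Φ !![(a : ℂ), b; (starRingEnd ℂ) b, (c : ℂ)]) 0 0 = (Ψ a : ℂ) ∧
      (Φ !![(a : ℂ), b; (starRingEnd ℂ) b, (c : ℂ)]) 1 1 = (Ψ c : ℂ) := by
  have hdiag : Matrix.diagonal ![(1 : ℂ), 0] = !![(1 : ℂ), 0; 0, 0] := by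
    ext i j; fin_cases i <;> fin_cases j <;> simp [Matrix.diagonal_apply]
  rw [hdiag] at hE
  set E : Matrix (Fin 2) (Fin 2) ℂ := !![(1 : ℂ), 0; 0, 0] with hEdef
  set F : Matrix (Fin 2) (Fin 2) ℂ := !![(0 : ℂ), 0; 0, 1] with hFdef
  set S : Matrix (Fin 2) (Fin 2) ℂ := !![(0 : ℂ), 1; 1, 0] with hSdef
  have hEh : E.IsHermitian := by
    ext i j; fin_cases i <;> fin_cases j <;>
      simp [hEdef, Matrix.conjTranspose_apply]
  have hFh : F.IsHermitian := by
    ext i j; fin_cases i <;> fin_cases j <;>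
      simp [hFdef, Matrix.conjTranspose_apply]
  have hSh : S.IsHermitian := by
    ext i j; fin_cases i <;> fin_cases j <;>
      simp [hSdef, Matrix.conjTranspose_apply]
  have h1h : (1 : Matrix (Fin 2) (Fin 2) ℂ).IsHermitian := Matrix.isHermitian_one
  -- Φ S is an involution
  have hS2 : Φ S * Φ S = 1 := by
    have h := hjtp S 1 hSh h1h
    have hSS : S * 1 * S = 1 := by
      ext i j; fin_cases i <;> fin_cases j <;>
        simp [hSdef, Matrix.mul_apply, Fin.sum_univ_two, Matrix.one_apply]
    rw [hSS, h1] at h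
    simpa using h.symm
  -- Φ F = Φ S * E * Φ S
  have hFS : Φ F = Φ S * E * Φ S := by
    have h := hjtp S E hSh hEh
    have hSES : S * E * S = F := by
      ext i j; fin_cases i <;> fin_cases j <;>
        simp [hSdef, hEdef, hFdef, Matrix.mul_apply, Fin.sum_univ_two]
    rw [hSES, hE] at h; exact h
  -- Φ F is idempotent
  have hFidem : Φ F * Φ F = Φ F := by
    have h := hjtp F 1 hFh h1h
    have hFF : F * 1 * F = F := by
      ext i j; fin_cases i <;> fin_cases j <;>
        simp [hFdef, Matrix.mul_apply, Fin.sum_univ_two, Matrix.one_apply]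
    rw [hFF, h1] at h
    simpa using h.symm
  -- (Φ F) 0 0 = 0
  have hF00 : (Φ F) 0 0 = 0 := by
    have h := hjtp E F hEh hFh
    have hEFE : E * F * E = 0 := by
      ext i j; fin_cases i <;> fin_cases j <;>
        simp [hEdef, hFdef, Matrix.mul_apply, Fin.sum_univ_two]
    rw [hEFE, h0, hE] at h
    have h00 := congrFun (congrFun h.symm 0) 0
    rw [Matrix.mul_apply, Fin.sum_univ_two, Matrix.mul_apply, Fin.sum_univ_two,
      Matrix.mul_apply, Fin.sum_univ_two] at h00
    simpa [hEdef] using h00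
  -- Φ F ≠ 0
  have hFne : Φ F ≠ 0 := by
    intro hc
    have h : Φ S * Φ F * Φ S = E := by
      rw [hFS, ← mul_assoc, ← mul_assoc, hS2, one_mul, mul_assoc, hS2, mul_one]
    rw [hc, mul_zero, zero_mul] at h
    have h00 := congrFun (congrFun h 0) 0
    simp [hEdef] at h00
  have hF : Φ F = F := idem_classify_s11 (Φ F) (hherm F hFh) hFidem hF00 hFne
  -- main part
  intro a c b
  set A : Matrix (Fin 2) (Fin 2) ℂ := !![(a : ℂ), b; (starRingEnd ℂ) b, (c : ℂ)] with hAdef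
  have hAh : A.IsHermitian := by
    ext i j; fin_cases i <;> fin_cases j <;>
      simp [hAdef, Matrix.conjTranspose_apply]
  have hsmulh : ∀ l : ℝ, ((l : ℂ) • (1 : Matrix (Fin 2) (Fin 2) ℂ)).IsHermitian := by
    intro l
    rw [Matrix.IsHermitian, Matrix.conjTranspose_smul, Matrix.isHermitian_one.eq]
    norm_num
  have eE : ∀ X : Matrix (Fin 2) (Fin 2) ℂ, (E * X * E) 0 0 = X 0 0 := by
    intro X; rw [hEdef]
    simp [Matrix.mul_apply, Matrix.vecMul, dotProduct, Fin.sum_univ_two]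
  have eF : ∀ X : Matrix (Fin 2) (Fin 2) ℂ, (F * X * F) 1 1 = X 1 1 := by
    intro X; rw [hFdef]
    simp [Matrix.mul_apply, Matrix.vecMul, dotProduct, Fin.sum_univ_two]
  constructor
  · have key : E * A * E = E * ((a : ℂ) • 1) * E := by
      ext i j; fin_cases i <;> fin_cases j <;>
        simp [hEdef, hAdef, Matrix.mul_apply, Matrix.vecMul, dotProduct,
          Fin.sum_univ_two, Matrix.one_apply]
    have hj1 := hjtp E A hEh hAh
    have hj2 := hjtp E ((a : ℂ) • 1) hEh (hsmulh a)
    rw [key, hj2, hE, hΨ] at hj1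
    calc Φ A 0 0 = (E * Φ A * E) 0 0 := (eE _).symm
      _ = (E * ((Ψ a : ℂ) • 1) * E) 0 0 := by rw [hj1]
      _ = ((Ψ a : ℂ) • (1 : Matrix (Fin 2) (Fin 2) ℂ)) 0 0 := eE _
      _ = (Ψ a : ℂ) := by simp [Matrix.one_apply]
  · have key : F * A * F = F * ((c : ℂ) • 1) * F := by
      ext i j; fin_cases i <;> fin_cases j <;>
        simp [hFdef, hAdef, Matrix.mul_apply, Matrix.vecMul, dotProduct,
          Fin.sum_univ_two, Matrix.one_apply]
    have hj1 := hjtp F A hFh hAh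
    have hj2 := hjtp F ((c : ℂ) • 1) hFh (hsmulh c)
    rw [key, hj2, hF, hΨ] at hj1
    calc Φ A 1 1 = (F * Φ A * F) 1 1 := (eF _).symm
      _ = (F * ((Ψ c : ℂ) • 1) * F) 1 1 := by rw [hj1]
      _ = ((Ψ c : ℂ) • (1 : Matrix (Fin 2) (Fin 2) ℂ)) 1 1 := eF _
      _ = (Ψ c : ℂ) := by simp [Matrix.one_apply]
end

section
/- Define η(A) = -1 if A is negative definite and η(A) = 1 if A is invertible but not negative definite. If Φ : H₂(ℂ) → H₂(ℂ) is a J.T.P. homomorphism, then Φ'(A) := η(A)·Φ(A) for invertible A, and Φ'(A) := 0 for singular A, is also a J.T.P. homomorphism. -/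
open Matrix
open scoped ComplexOrder Classical

lemma posdef_congr {M B : Matrix (Fin 2) (Fin 2) ℂ} (hM : M.PosDef) (hB : IsUnit B) :
    (B * M * Bᴴ).PosDef := by
  refine Matrix.PosDef.of_dotProduct_mulVec_pos ?_ ?_
  · exact Matrix.isHermitian_mul_mul_conjTranspose B hM.1
  · intro x hx
    have hinj : Function.Injective (Bᴴ.mulVec) := by
      refine Matrix.mulVec_injective_iff_isUnit.mpr ?_
      simpa [Matrix.isUnit_conjTranspose] using hB
    have hxne : Bᴴ *ᵥ x ≠ 0 := by
      intro h
      exact hx (hinj (by simpa using h))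
    have := hM.dotProduct_mulVec_pos hxne
    simpa only [star_mulVec, dotProduct_mulVec, vecMul_vecMul, conjTranspose_conjTranspose,
      Matrix.mul_assoc] using this

theorem jtp_eta_twist
    (Φ Φ' : Matrix (Fin 2) (Fin 2) ℂ → Matrix (Fin 2) (Fin 2) ℂ)
    (hherm : ∀ A, A.IsHermitian → (Φ A).IsHermitian)
    (hjtp : ∀ A B, A.IsHermitian → B.IsHermitian → Φ (A * B * A) = Φ A * Φ B * Φ A)
    (hΦ' : ∀ A : Matrix (Fin 2) (Fin 2) ℂ,
      Φ' A = if IsUnit A then (if (-A).PosDef then -Φ A else Φ A) else 0) :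
    ∀ A B : Matrix (Fin 2) (Fin 2) ℂ, A.IsHermitian → B.IsHermitian →
      Φ' (A * B * A) = Φ' A * Φ' B * Φ' A := by
  intro A B hA hB
  rw [hΦ' (A * B * A), hΦ' A, hΦ' B]
  by_cases hAu : IsUnit A
  · by_cases hBu : IsUnit B
    · have hABAu : IsUnit (A * B * A) := (hAu.mul hBu).mul hAu
      have hkey : (-(A * B * A)).PosDef ↔ (-B).PosDef := by
        constructor
        · intro h
          have hAinv : IsUnit A⁻¹ := by
            rw [Matrix.isUnit_iff_isUnit_det]
            exact A.isUnit_nonsing_inv_det ((Matrix.isUnit_iff_isUnit_det A).mp hAu)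
          have h2 : (A⁻¹ * -(A * B * A) * (A⁻¹)ᴴ).PosDef := posdef_congr h hAinv
          have hAH : (A⁻¹)ᴴ = A⁻¹ := by rw [conjTranspose_nonsing_inv, hA.eq]
          have he : A⁻¹ * -(A * B * A) * (A⁻¹)ᴴ = -B := by
            rw [hAH, Matrix.mul_neg, Matrix.neg_mul]
            rw [show A⁻¹ * (A * B * A) * A⁻¹ = (A⁻¹ * A) * B * (A * A⁻¹) by
              noncomm_ring]
            rw [Matrix.nonsing_inv_mul A (isUnit_iff_isUnit_det A |>.mp hAu),
              Matrix.mul_nonsing_inv A (isUnit_iff_isUnit_det A |>.mp hAu),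
              Matrix.one_mul, Matrix.mul_one]
          rwa [he] at h2
        · intro h
          have h2 : (A * -B * Aᴴ).PosDef := posdef_congr h hAu
          have he : A * -B * Aᴴ = -(A * B * A) := by
            rw [hA.eq, Matrix.mul_neg, Matrix.neg_mul]
          rwa [he] at h2
      simp only [hABAu, hAu, hBu, if_true, hjtp A B hA hB]
      by_cases hBp : (-B).PosDef
      · rw [if_pos (hkey.mpr hBp), if_pos hBp]
        by_cases hAp : (-A).PosDef <;> simp [hAp, Matrix.neg_mul, Matrix.mul_neg]
      · rw [if_neg (fun h => hBp (hkey.mp h)), if_neg hBp]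
        by_cases hAp : (-A).PosDef <;> simp [hAp, Matrix.neg_mul, Matrix.mul_neg]
    · have : ¬ IsUnit (A * B * A) := by
        intro h
        rw [Matrix.isUnit_iff_isUnit_det, Matrix.det_mul, Matrix.det_mul] at h
        exact hBu ((Matrix.isUnit_iff_isUnit_det B).mpr
          (isUnit_of_mul_isUnit_right (isUnit_of_mul_isUnit_left h)))
      simp [this, hBu]
  · have : ¬ IsUnit (A * B * A) := by
      intro h
      rw [Matrix.isUnit_iff_isUnit_det, Matrix.det_mul] at h
      exact hAu ((Matrix.isUnit_iff_isUnit_det A).mpr (isUnit_of_mul_isUnit_right h))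
    simp [this, hAu]
end

section
/- Let Φ : H₂(ℂ) → H₂(ℂ) be a J.T.P. homomorphism with Φ(0)=0, Φ(I)=I, vanishing on all matrices of rank ≤ 1, mapping scalars to scalars, and such that Φ(diag(-1,1)) = diag(-1,1) and Φ(K) has eigenvalues {-1,1} where K = [[0,1],[1,0]]. Then Φ(K) = diag(1,-1), Φ(K) = diag(-1,1), or Φ(K) = [[0,b],[conj(b),0]] for some b ∈ ℂ with |b| = 1. -/
open Matrix

theorem jtp_image_of_K
    (Φ : Matrix (Fin 2) (Fin 2) ℂ → Matrix (Fin 2) (Fin 2) ℂ)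
    (hherm : ∀ A, A.IsHermitian → (Φ A).IsHermitian)
    (hjtp : ∀ A B, A.IsHermitian → B.IsHermitian → Φ (A * B * A) = Φ A * Φ B * Φ A)
    (h0 : Φ 0 = 0) (h1 : Φ 1 = 1)
    (hdeg : ∀ A : Matrix (Fin 2) (Fin 2) ℂ, A.IsHermitian → A.rank ≤ 1 → Φ A = 0)
    (hscal : ∀ l : ℝ, ∃ m : ℝ, Φ ((l : ℂ) • 1) = (m : ℂ) • 1)
    (hD : Φ (Matrix.diagonal ![(-1 : ℂ), 1]) = Matrix.diagonal ![(-1 : ℂ), 1])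
    (hK : spectrum ℂ (Φ !![(0 : ℂ), 1; 1, 0]) = {-1, 1}) :
    Φ !![(0 : ℂ), 1; 1, 0] = Matrix.diagonal ![(1 : ℂ), -1] ∨
    Φ !![(0 : ℂ), 1; 1, 0] = Matrix.diagonal ![(-1 : ℂ), 1] ∨
    ∃ b : ℂ, ‖b‖ = 1 ∧ Φ !![(0 : ℂ), 1; 1, 0] = !![0, b; (starRingEnd ℂ) b, 0] := by
  set K : Matrix (Fin 2) (Fin 2) ℂ := !![(0 : ℂ), 1; 1, 0] with hKdef
  set D : Matrix (Fin 2) (Fin 2) ℂ := Matrix.diagonal ![(-1 : ℂ), 1] with hDdef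
  set K' : Matrix (Fin 2) (Fin 2) ℂ := !![(0 : ℂ), -1; -1, 0] with hK'def
  have hKh : K.IsHermitian := by
    show _ᴴ = _; ext i j; fin_cases i <;> fin_cases j <;> simp [hKdef]
  have hDh : D.IsHermitian := by
    show _ᴴ = _; ext i j; fin_cases i <;> fin_cases j <;> simp [hDdef, Matrix.diagonal]
  have hK'h : K'.IsHermitian := by
    show _ᴴ = _; ext i j; fin_cases i <;> fin_cases j <;> simp [hK'def]
  set M : Matrix (Fin 2) (Fin 2) ℂ := Φ K with hMdef
  have hMh : M.IsHermitian := hherm K hKh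
  -- M * M = 1
  have hKIK : K * 1 * K = 1 := by
    rw [mul_one]; ext i j; fin_cases i <;> fin_cases j <;>
      simp [hKdef, Matrix.mul_apply, Fin.sum_univ_two]
  have hMM : M * M = 1 := by
    have h := hjtp K 1 hKh Matrix.isHermitian_one
    rw [hKIK, h1, mul_one] at h
    exact h.symm
  -- Φ K' = D * M * D
  have hDKD : D * K * D = K' := by
    ext i j; fin_cases i <;> fin_cases j <;>
      simp [hKdef, hDdef, hK'def, Matrix.mul_apply, Fin.sum_univ_two, Matrix.diagonal]
  have hNK : Φ K' = D * M * D := by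
    have h := hjtp D K hDh hKh
    rw [hDKD, hD] at h
    exact h
  -- K' * D * K' = K * D * K
  have hKDK : K' * D * K' = K * D * K := by
    ext i j; fin_cases i <;> fin_cases j <;>
      simp [hKdef, hDdef, hK'def, Matrix.mul_apply, Fin.sum_univ_two, Matrix.diagonal]
  have hF : M * D * M = (D * M * D) * D * (D * M * D) := by
    have h1' := hjtp K D hKh hDh
    have h2' := hjtp K' D hK'h hDh
    rw [hD] at h1' h2'
    rw [hKDK, hNK] at h2'
    rw [← h1', ← h2']
  -- entry equations
  have e00 : M 0 0 * M 0 0 + M 0 1 * M 1 0 = 1 := by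
    have h := congrFun (congrFun hMM 0) 0
    simpa [Matrix.mul_apply, Fin.sum_univ_two, Matrix.one_apply] using h
  have e01 : M 0 0 * M 0 1 + M 0 1 * M 1 1 = 0 := by
    have h := congrFun (congrFun hMM 0) 1
    simpa [Matrix.mul_apply, Fin.sum_univ_two, Matrix.one_apply] using h
  have e11 : M 1 0 * M 0 1 + M 1 1 * M 1 1 = 1 := by
    have h := congrFun (congrFun hMM 1) 1
    simpa [Matrix.mul_apply, Fin.sum_univ_two, Matrix.one_apply] using h
  have f01 : M 0 1 * (M 1 1 - M 0 0) = 0 := by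
    have h := congrFun (congrFun hF 0) 1
    simp [hDdef, Matrix.mul_apply, Fin.sum_univ_two, Matrix.diagonal] at h
    ring_nf at h ⊢
    linear_combination h / 2
  have hconj : M 1 0 = (starRingEnd ℂ) (M 0 1) := by
    have h := congrFun (congrFun hMh 1) 0
    simpa [Matrix.conjTranspose_apply] using h.symm
  by_cases hb : M 0 1 = 0
  · -- diagonal case
    have h10 : M 1 0 = 0 := by rw [hconj, hb, map_zero]
    have ha2 : M 0 0 * M 0 0 = 1 := by rw [hb] at e00; simpa using e00
    have hd2 : M 1 1 * M 1 1 = 1 := by rw [hb] at e11; simpa using e11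
    have ha : M 0 0 = 1 ∨ M 0 0 = -1 := by
      rcases mul_self_eq_one_iff.mp ha2 with h | h
      · exact Or.inl h
      · exact Or.inr h
    have hd : M 1 1 = 1 ∨ M 1 1 = -1 := by
      rcases mul_self_eq_one_iff.mp hd2 with h | h
      · exact Or.inl h
      · exact Or.inr h
    rcases ha with ha | ha <;> rcases hd with hd | hd
    · -- M = 1 : contradiction with spectrum
      exfalso
      have hM1 : M = 1 := by
        ext i j; fin_cases i <;> fin_cases j <;>
          simp [ha, hd, hb, h10, Matrix.one_apply]
      rw [hM1, spectrum.one_eq] at hK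
      have : (-1 : ℂ) ∈ ({1} : Set ℂ) := hK ▸ (by left; rfl)
      simp at this
      exact (by norm_num : (-1 : ℂ) ≠ 1) this
    · left
      ext i j; fin_cases i <;> fin_cases j <;>
        simp [hDdef, ha, hd, hb, h10, Matrix.diagonal]
    · right; left
      ext i j; fin_cases i <;> fin_cases j <;>
        simp [hDdef, ha, hd, hb, h10, Matrix.diagonal]
    · exfalso
      have hM1 : M = algebraMap ℂ (Matrix (Fin 2) (Fin 2) ℂ) (-1) := by
        ext i j; fin_cases i <;> fin_cases j <;>
          simp [ha, hd, hb, h10, Matrix.algebraMap_matrix_apply]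
      rw [hM1, spectrum.scalar_eq] at hK
      have : (1 : ℂ) ∈ ({-1} : Set ℂ) := hK ▸ (by right; rfl)
      simp at this
      exact (by norm_num : (1 : ℂ) ≠ -1) this
  · -- off-diagonal case
    right; right
    have hsum : M 0 0 + M 1 1 = 0 := by
      rcases mul_eq_zero.mp (show M 0 1 * (M 0 0 + M 1 1) = 0 by linear_combination e01) with h | h
      · exact absurd h hb
      · exact h
    have hdiff : M 1 1 - M 0 0 = 0 := by
      rcases mul_eq_zero.mp f01 with h | h
      · exact absurd h hb
      · exact h
    have ha0 : M 0 0 = 0 := by linear_combination (hsum - hdiff) / 2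
    have hd0 : M 1 1 = 0 := by linear_combination (hsum + hdiff) / 2
    refine ⟨M 0 1, ?_, ?_⟩
    · have : M 0 1 * (starRingEnd ℂ) (M 0 1) = 1 := by
        rw [← hconj]; linear_combination e00 - (M 0 0) * ha0
      have habs : (‖M 0 1‖) ^ 2 = 1 := by
        have := congrArg (‖·‖) this
        simpa [_root_.map_mul, Complex.norm_conj, sq] using this
      nlinarith [norm_nonneg (M 0 1), habs]
    · ext i j; fin_cases i <;> fin_cases j <;>
        simp [ha0, hd0, hconj]
end

section
/- Let γ : (0,∞) → (0,∞) be a multiplicative function of the form γ(x) = x^c for some real constant c, satisfying the functional equation γ((x-1+√(2x²+2))/(x+1)) = (γ(x)-1+√(2γ(x)²+2))/(γ(x)+1) for all x > 0, and γ not identically 1. Then c = 1 or c = -1. -/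
open Real Filter Topology

noncomputable def Faux (x : ℝ) : ℝ := (x - 1 + Real.sqrt (2 * x ^ 2 + 2)) / (x + 1)

lemma sqrt_four' : Real.sqrt 4 = 2 := by
  rw [show (4:ℝ) = 2^2 by norm_num, Real.sqrt_sq (by norm_num : (0:ℝ) ≤ 2)]

lemma Faux_pos {x : ℝ} (hx : 0 < x) : 0 < Faux x := by
  apply div_pos _ (by linarith)
  have h1 : Real.sqrt 2 ≤ Real.sqrt (2 * x ^ 2 + 2) := Real.sqrt_le_sqrt (by nlinarith)
  have h2 : (1:ℝ) < Real.sqrt 2 := by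
    nlinarith [Real.sq_sqrt (by norm_num : (0:ℝ) ≤ 2), Real.sqrt_nonneg 2]
  linarith

lemma Faux_one : Faux 1 = 1 := by
  rw [Faux, show (2:ℝ) * 1 ^ 2 + 2 = 4 by norm_num, sqrt_four']
  norm_num

lemma Faux_seven : Faux 7 = 2 := by
  rw [Faux, show (2:ℝ) * 7 ^ 2 + 2 = 10 ^ 2 by norm_num,
    Real.sqrt_sq (by norm_num : (0:ℝ) ≤ 10)]
  norm_num

noncomputable def haux (t : ℝ) : ℝ := Real.log (Faux (Real.exp t))

lemma haux_zero : haux 0 = 0 := by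
  rw [haux, Real.exp_zero, Faux_one, Real.log_one]

lemma hasDerivAt_haux : HasDerivAt haux (1/2) 0 := by
  have he : HasDerivAt Real.exp 1 0 := by simpa using Real.hasDerivAt_exp 0
  have hu : HasDerivAt (fun t => 2 * Real.exp t ^ 2 + 2) 4 0 := by
    have := ((he.pow 2).const_mul 2).add_const 2
    norm_num [Real.exp_zero] at this
    exact this.add_const 2
  have hs : HasDerivAt (fun t => Real.sqrt (2 * Real.exp t ^ 2 + 2)) 1 0 := by
    have := hu.sqrt (by norm_num [Real.exp_zero])
    norm_num [Real.exp_zero, sqrt_four'] at this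
    convert this using 1
  have hN : HasDerivAt (fun t => Real.exp t - 1 + Real.sqrt (2 * Real.exp t ^ 2 + 2)) 2 0 := by
    have := (he.sub_const 1).add hs
    norm_num at this
    exact this
  have hD : HasDerivAt (fun t => Real.exp t + 1) 1 0 := he.add_const 1
  have hQ : HasDerivAt (fun t =>
      (Real.exp t - 1 + Real.sqrt (2 * Real.exp t ^ 2 + 2)) / (Real.exp t + 1)) (1/2) 0 := by
    have := hN.div hD (by norm_num [Real.exp_zero])
    norm_num [Real.exp_zero, sqrt_four'] at this
    exact this
  have hFx : (Real.exp 0 - 1 + Real.sqrt (2 * Real.exp 0 ^ 2 + 2)) / (Real.exp 0 + 1) = 1 := by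
    norm_num [Real.exp_zero, sqrt_four']
  have := hQ.log (by rw [hFx]; norm_num)
  rw [hFx] at this
  norm_num at this
  exact this

theorem power_solution_of_functional_equation
    (γ : ℝ → ℝ) (c : ℝ)
    (hpow : ∀ x : ℝ, 0 < x → γ x = x ^ c)
    (hfe : ∀ x : ℝ, 0 < x →
      γ ((x - 1 + Real.sqrt (2 * x ^ 2 + 2)) / (x + 1)) =
        (γ x - 1 + Real.sqrt (2 * γ x ^ 2 + 2)) / (γ x + 1))
    (hne : ¬ ∀ x : ℝ, 0 < x → γ x = 1) :
    c = 1 ∨ c = -1 := by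
  rcases eq_or_ne |c| 1 with habs | habs
  · exact (abs_eq zero_le_one).mp habs
  exfalso
  have hc0 : c ≠ 0 := by
    rintro rfl
    exact hne fun x hx => by rw [hpow x hx, Real.rpow_zero]
  -- key algebraic identity
  have key : ∀ x : ℝ, 0 < x → (Faux x) ^ c = Faux (x ^ c) := by
    intro x hx
    have hFx := Faux_pos hx
    have h1 := hfe x hx
    rw [hpow x hx] at h1
    have h2 : γ (Faux x) = Faux x ^ c := hpow _ hFx
    unfold Faux at h2 ⊢
    rw [h2] at h1
    exact h1
  have key2 : ∀ t : ℝ, haux (c * t) = c * haux t := by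
    intro t
    have hx : 0 < Real.exp t := Real.exp_pos t
    have hk := key (Real.exp t) hx
    have e1 : (Real.exp t) ^ c = Real.exp (c * t) := by
      rw [Real.rpow_def_of_pos hx, Real.log_exp, mul_comm]
    rw [e1] at hk
    calc haux (c * t) = Real.log (Faux (Real.exp (c * t))) := rfl
      _ = Real.log (Faux (Real.exp t) ^ c) := by rw [← hk]
      _ = c * Real.log (Faux (Real.exp t)) := Real.log_rpow (Faux_pos hx) c
  -- get a contracting factor d
  obtain ⟨d, hd0, hd1, hkey⟩ : ∃ d : ℝ, d ≠ 0 ∧ |d| < 1 ∧ ∀ t, haux (d * t) = d * haux t := by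
    rcases lt_or_gt_of_ne habs with h | h
    · exact ⟨c, hc0, h, key2⟩
    · refine ⟨c⁻¹, inv_ne_zero hc0, ?_, ?_⟩
      · rw [abs_inv]
        exact inv_lt_one_of_one_lt₀ h
      · intro t
        have := key2 (c⁻¹ * t)
        rw [show c * (c⁻¹ * t) = t by field_simp] at this
        rw [this, inv_mul_cancel_left₀ hc0]
  have hn : ∀ n : ℕ, ∀ t, haux (d ^ n * t) = d ^ n * haux t := by
    intro n
    induction n with
    | zero => intro t; simp
    | succ n ih =>
      intro t
      rw [show d ^ (n+1) * t = d * (d ^ n * t) by ring, hkey, ih]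
      ring
  set L := Real.log 7 with hLdef
  set M := Real.log 2 with hMdef
  have hL : haux L = M := by
    rw [haux, Real.exp_log (by norm_num : (0:ℝ) < 7), Faux_seven]
  have hLpos : 0 < L := Real.log_pos (by norm_num)
  have hLne : L ≠ 0 := ne_of_gt hLpos
  have hslope := hasDerivAt_iff_tendsto_slope.mp hasDerivAt_haux
  set s : ℕ → ℝ := fun n => d ^ n * L with hsdef
  have hsne : ∀ n, s n ≠ 0 := fun n => mul_ne_zero (pow_ne_zero n hd0) hLne
  have hs0 : Tendsto s atTop (𝓝 0) := by
    have := (tendsto_pow_atTop_nhds_zero_of_abs_lt_one hd1).mul_const L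
    simpa using this
  have hsw : Tendsto s atTop (𝓝[≠] 0) :=
    tendsto_nhdsWithin_of_tendsto_nhds_of_eventually_within _ hs0
      (Eventually.of_forall fun n => hsne n)
  have hcomp := hslope.comp hsw
  have heq : ∀ n : ℕ, slope haux 0 (s n) = M / L := by
    intro n
    rw [slope_def_field, haux_zero, hsdef]
    simp only []
    rw [hn n L, hL]
    rw [sub_zero, sub_zero, mul_div_mul_left M L (pow_ne_zero n hd0)]
  have hconst : Tendsto (fun _ : ℕ => M / L) atTop (𝓝 (1/2 : ℝ)) := by
    refine Tendsto.congr (fun n => heq n) hcomp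
  have hML : M / L = 1/2 := tendsto_nhds_unique tendsto_const_nhds hconst
  have h2M : 2 * M = L := by
    field_simp at hML
    linarith
  have h4 : Real.log 4 = Real.log 7 := by
    rw [show (4:ℝ) = 2 ^ 2 by norm_num, Real.log_pow]
    push_cast
    linarith
  have := Real.log_injOn_pos (Set.mem_Ioi.mpr (by norm_num : (0:ℝ) < 4))
    (Set.mem_Ioi.mpr (by norm_num : (0:ℝ) < 7)) h4
  norm_num at this
end

section
/- Let λ : Γ → Γ be a map on the unit circle Γ = {z ∈ ℂ : |z| = 1} with λ(1) = 1, satisfying λ(x)·λ(conj(y))·λ(x) = λ(x²·conj(y)) for all x, y ∈ Γ. Then λ is multiplicative (λ(xy) = λ(x)λ(y)) and λ(conj(x)) = conj(λ(x)) for all x, y ∈ Γ. -/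
theorem circle_map_multiplicative
    (l : ℂ → ℂ)
    (hmaps : ∀ x : ℂ, ‖x‖ = 1 → ‖l x‖ = 1)
    (h1 : l 1 = 1)
    (heq : ∀ x y : ℂ, ‖x‖ = 1 → ‖y‖ = 1 →
      l x * l ((starRingEnd ℂ) y) * l x = l (x ^ 2 * (starRingEnd ℂ) y)) :
    (∀ x y : ℂ, ‖x‖ = 1 → ‖y‖ = 1 → l (x * y) = l x * l y) ∧
    (∀ x : ℂ, ‖x‖ = 1 → l ((starRingEnd ℂ) x) = (starRingEnd ℂ) (l x)) := by
  have heq' : ∀ x z : ℂ, ‖x‖ = 1 → ‖z‖ = 1 →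
      l x * l z * l x = l (x ^ 2 * z) := by
    intro x z hx hz
    have := heq x ((starRingEnd ℂ) z) hx (by simpa using hz)
    simpa using this
  have hsq : ∀ x : ℂ, ‖x‖ = 1 → l (x ^ 2) = l x ^ 2 := by
    intro x hx
    simpa [h1, sq] using (heq' x 1 hx (by simp)).symm
  have hmul : ∀ x y : ℂ, ‖x‖ = 1 → ‖y‖ = 1 →
      l (x * y) = l x * l y := by
    intro x y hx hy
    obtain ⟨w, hw⟩ := Complex.isAlgClosed.exists_pow_nat_eq x two_pos
    have hwabs : ‖w‖ = 1 := by
      have : ‖w‖ ^ 2 = 1 := by rw [← norm_pow, hw, hx]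
      nlinarith [norm_nonneg w]
    calc l (x * y) = l (w ^ 2 * y) := by rw [hw]
      _ = l w * l y * l w := (heq' w y hwabs hy).symm
      _ = l w ^ 2 * l y := by ring
      _ = l (w ^ 2) * l y := by rw [hsq w hwabs]
      _ = l x * l y := by rw [hw]
  refine ⟨hmul, fun x hx => ?_⟩
  have hcx : ‖(starRingEnd ℂ) x‖ = 1 := by simpa using hx
  have h2 : l x * l ((starRingEnd ℂ) x) = 1 := by
    rw [← hmul x _ hx hcx, Complex.mul_conj]
    simp [Complex.normSq_eq_norm_sq, hx, h1]
  have h3 : l x * (starRingEnd ℂ) (l x) = 1 := by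
    rw [Complex.mul_conj]
    simp [Complex.normSq_eq_norm_sq, hmaps x hx]
  have hne : l x ≠ 0 := by
    intro h; rw [h] at h3; simp at h3
  exact mul_left_cancel₀ hne (h2.trans h3.symm)
end

section
/- Let Φ : H₂(ℂ) → ℝ be a J.T.P. homomorphism with Φ(I) = 1 and Φ(0) = 0. Then Φ(A) = 0 for every A ∈ H₂(ℂ) with rank A < 2. -/
open Matrix Complex

theorem jtp_to_real_rank_lt_two
    (Φ : Matrix (Fin 2) (Fin 2) ℂ → ℝ)
    (hjtp : ∀ A B : Matrix (Fin 2) (Fin 2) ℂ, A.IsHermitian → B.IsHermitian →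
      Φ (A * B * A) = Φ A * Φ B * Φ A)
    (h1 : Φ 1 = 1) (h0 : Φ 0 = 0) :
    ∀ A : Matrix (Fin 2) (Fin 2) ℂ, A.IsHermitian → A.rank < 2 → Φ A = 0 := by
  intro A hA hrank
  have hdet : A.det = 0 := by
    by_contra hd
    have : A.rank = 2 := by
      simpa using A.rank_of_isUnit ((Matrix.isUnit_iff_isUnit_det A).2 (isUnit_iff_ne_zero.2 hd))
    omega
  obtain ⟨a, b, c, d, rfl⟩ : ∃ a b c d, A = !![a, b; c, d] :=
    ⟨_, _, _, _, Matrix.eta_fin_two A⟩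
  have hdet2 : a * d - b * c = 0 := by simpa [Matrix.det_fin_two] using hdet
  have hc : c = (starRingEnd ℂ) b := by
    have := hA.apply 1 0
    simpa using this.symm
  have ha : (starRingEnd ℂ) a = a := by
    have := hA.apply 0 0
    simpa using this
  have hd : (starRingEnd ℂ) d = d := by
    have := hA.apply 1 1
    simpa using this
  subst hc
  obtain ⟨u, hu1, hu2⟩ : ∃ u : ℂ, u * (starRingEnd ℂ) u = 1 ∧
      u * u * (starRingEnd ℂ) b = -b := by
    by_cases h : b = 0
    · exact ⟨1, by simp, by simp [h]⟩
    · have hcabs : (‖b‖ : ℂ) ≠ 0 := by simpa using h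
      have key : ((‖b‖ : ℂ)) * (‖b‖ : ℂ) = b * (starRingEnd ℂ) b := by
        rw [← Complex.ofReal_mul, ← sq, Complex.sq_norm, Complex.mul_conj]
      refine ⟨Complex.I * b / (‖b‖ : ℂ), ?_, ?_⟩
      · simp only [map_div₀, _root_.map_mul, Complex.conj_I, Complex.conj_ofReal]
        field_simp
        linear_combination (-(b * (starRingEnd ℂ) b)) * Complex.I_sq - key
      · field_simp
        linear_combination (b * (starRingEnd ℂ) b) * Complex.I_sq + key
  have hu2' : (starRingEnd ℂ) u * (starRingEnd ℂ) u * b = -((starRingEnd ℂ) b) := by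
    have := congrArg (starRingEnd ℂ) hu2
    simpa [mul_comm, mul_left_comm] using this
  set U : Matrix (Fin 2) (Fin 2) ℂ := !![0, u; (starRingEnd ℂ) u, 0] with hUdef
  set B : Matrix (Fin 2) (Fin 2) ℂ := (a + d) • 1 - !![a, b; (starRingEnd ℂ) b, d] with hBdef
  have hU : U.IsHermitian := by
    rw [Matrix.IsHermitian]
    ext i j
    fin_cases i <;> fin_cases j <;> simp [hUdef, Matrix.conjTranspose_apply]
  have ht : star (a + d) = a + d := by
    simp only [star_add]
    rw [show star a = (starRingEnd ℂ) a from rfl, show star d = (starRingEnd ℂ) d from rfl,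
      ha, hd]
  have hB : B.IsHermitian := by
    rw [Matrix.IsHermitian, hBdef, conjTranspose_sub, conjTranspose_smul, conjTranspose_one,
      hA, ht]
  have hUU : U * U = 1 := by
    ext i j
    fin_cases i <;> fin_cases j <;>
      simp [hUdef, Matrix.mul_apply, Fin.sum_univ_two, Matrix.one_apply] <;>
      linear_combination hu1
  have hA2 : !![a, b; (starRingEnd ℂ) b, d] * !![a, b; (starRingEnd ℂ) b, d]
      = (a + d) • !![a, b; (starRingEnd ℂ) b, d] := by
    ext i j
    fin_cases i <;> fin_cases j <;>
      simp [Matrix.mul_apply, Fin.sum_univ_two, Matrix.smul_apply, smul_eq_mul] <;>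
      first
        | ring1
        | linear_combination -hdet2
  have hAB : !![a, b; (starRingEnd ℂ) b, d] * B = 0 := by
    rw [hBdef, mul_sub, mul_smul_comm, mul_one, hA2, sub_self]
  have hUAU : U * !![a, b; (starRingEnd ℂ) b, d] * U = B := by
    rw [hUdef, hBdef]
    ext i j
    fin_cases i <;> fin_cases j <;>
      simp [Matrix.mul_apply, Fin.sum_univ_two, Matrix.smul_apply, Matrix.one_apply,
        Matrix.sub_apply, smul_eq_mul] <;>
      first
        | linear_combination d * hu1
        | linear_combination hu2
        | linear_combination hu2'
        | linear_combination a * hu1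
  have hPhiU : Φ U * Φ U = 1 := by
    have h := hjtp U 1 hU Matrix.isHermitian_one
    rw [mul_one, hUU, h1] at h
    linarith
  have hPhiB : Φ B = Φ !![a, b; (starRingEnd ℂ) b, d] := by
    have h := hjtp U !![a, b; (starRingEnd ℂ) b, d] hU hA
    rw [hUAU] at h
    rw [h]
    linear_combination Φ !![a, b; (starRingEnd ℂ) b, d] * hPhiU
  have hfin := hjtp !![a, b; (starRingEnd ℂ) b, d] B hA hB
  rw [hAB, zero_mul, h0, hPhiB] at hfin
  have h3 : Φ !![a, b; (starRingEnd ℂ) b, d] ^ 3 = 0 := by linear_combination -hfin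
  exact pow_eq_zero_iff (by norm_num : (3 : ℕ) ≠ 0) |>.mp h3
end
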